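/- arXiv:1407.1525 — 2 statements merged into one kernel-verified Lean document; each statement's English description precedes it below -/
import Mathlib

section
/- Let T_0 be a triangulation of a finite set P of points in the plane and let F = ⟨f_1,…,f_r⟩ be a valid sequence of flips transforming T_0 into T_r. If f_s is a sink of D_F (no arc of D_F leaves f_s), then the sequence F′ obtained from F by deleting f_s and appending it at the end is a valid sequence of flips with respect to T_0 and F′ transforms T_0 into T_r. -/
/-- A point in the plane. -/
abbrev Pt := ℝ × ℝ

/-- An edge is an (unordered) pair of points, modeled as a finite set of points
(of cardinality 2 whenever relevant). -/
abbrev Edge := Finset Pt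

/-- A triangulation of a finite point set `P` in the plane: a set of (nondegenerate)
triangles with vertices in `P`, whose union is the convex hull of `P`, whose interiors
are pairwise disjoint, and such that every point of `P` is a vertex of some triangle.
Each triangle is modeled by its vertex set (a 3-element finset). -/
structure Triangulation (P : Finset Pt) where
  triangles : Finset (Finset Pt)
  card_eq : ∀ T ∈ triangles, T.card = 3
  not_collinear : ∀ T ∈ triangles, ¬ Collinear ℝ (T : Set Pt)
  vertices_subset : ∀ T ∈ triangles, (T : Set Pt) ⊆ (P : Set Pt)
  covers : (⋃ T ∈ triangles, convexHull ℝ (T : Set Pt)) = convexHull ℝ (P : Set Pt)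
  interiors_disjoint : ∀ T₁ ∈ triangles, ∀ T₂ ∈ triangles, T₁ ≠ T₂ →
    interior (convexHull ℝ (T₁ : Set Pt)) ∩ interior (convexHull ℝ (T₂ : Set Pt)) = ∅
  mem_vertex : ∀ p ∈ P, ∃ T ∈ triangles, p ∈ T

/-- `e` is an edge (a side of some triangle) of the triangulation `𝒯`. -/
def Triangulation.IsEdge {P : Finset Pt} (𝒯 : Triangulation P) (e : Edge) : Prop :=
  e.card = 2 ∧ ∃ T ∈ 𝒯.triangles, e ⊆ T

/-- The edges `e` and `e'` are both sides of one triangle of `𝒯`. -/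
def Triangulation.BothInTriangle {P : Finset Pt} (𝒯 : Triangulation P) (e e' : Edge) : Prop :=
  e.card = 2 ∧ e'.card = 2 ∧ ∃ T ∈ 𝒯.triangles, e ⊆ T ∧ e' ⊆ T

/-- The two distinct edges `e` and `e'` share a triangle in `𝒯`. -/
def Triangulation.ShareTriangle {P : Finset Pt} (𝒯 : Triangulation P) (e e' : Edge) : Prop :=
  e ≠ e' ∧ 𝒯.BothInTriangle e e'

/-- A flip: it removes the underlying edge `old` (the edge `ε(f)`) and creates the
new edge `new` (the edge `φ(f)`). -/
structure Flip where
  old : Edge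
  new : Edge

/-- The flip `f` is admissible in the triangulation `𝒯` and performing it in `𝒯`
yields the triangulation `𝒯'`: the underlying edge `f.old` is an interior edge of `𝒯`,
i.e. a side of exactly two triangles `T₁ ≠ T₂` of `𝒯`, the quadrilateral `T₁ ∪ T₂`
they form is convex (has four vertices, each in convex position), `f.new` is the other
diagonal of this quadrilateral, and `𝒯'` is obtained from `𝒯` by replacing `T₁, T₂`
by the two triangles of the quadrilateral determined by the new diagonal. -/
def FlipStep {P : Finset Pt} (𝒯 : Triangulation P) (f : Flip) (𝒯' : Triangulation P) : Prop :=
  ∃ T₁ ∈ 𝒯.triangles, ∃ T₂ ∈ 𝒯.triangles, T₁ ≠ T₂ ∧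
    f.old.card = 2 ∧ f.old ⊆ T₁ ∧ f.old ⊆ T₂ ∧
    (∀ T ∈ 𝒯.triangles, f.old ⊆ T → T = T₁ ∨ T = T₂) ∧
    (T₁ ∪ T₂).card = 4 ∧
    (∀ p ∈ T₁ ∪ T₂, p ∉ convexHull ℝ (((T₁ ∪ T₂).erase p : Finset Pt) : Set Pt)) ∧
    f.new = (T₁ ∪ T₂) \ f.old ∧
    𝒯'.triangles = (𝒯.triangles \ {T₁, T₂}) ∪ f.old.image (fun p => insert p f.new)

/-- A valid sequence of `r` flips with respect to the triangulation `tri 0`,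
together with the intermediate triangulations: flip `i` (the `(i+1)`-st flip) is
admissible in `tri i` and performing it yields `tri (i+1)`. The sequence transforms
`tri 0` into `tri (Fin.last r)`. -/
structure FlipSeq (P : Finset Pt) (r : ℕ) where
  tri : Fin (r + 1) → Triangulation P
  flips : Fin r → Flip
  step : ∀ i : Fin r, FlipStep (tri i.castSucc) (flips i) (tri i.succ)

/-- The arc relation of the DAG `D_F`: there is an arc `fᵢ → fⱼ` iff `i < j`,
(1) `φ(fᵢ) = ε(fⱼ)` or `φ(fᵢ)` and `ε(fⱼ)` share a triangle in `T_{j-1}`, and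
(2) no flip strictly between them has underlying edge `φ(fᵢ)`. -/
def FlipSeq.Arc {P : Finset Pt} {r : ℕ} (S : FlipSeq P r) (i j : Fin r) : Prop :=
  i < j ∧
  ((S.flips i).new = (S.flips j).old ∨
    (S.tri j.castSucc).ShareTriangle (S.flips i).new (S.flips j).old) ∧
  ∀ p : Fin r, i < p → p < j → (S.flips p).old ≠ (S.flips i).new

/-- Two flips lie in the same weakly connected component of `D_F`. -/
def FlipSeq.SameComponent {P : Finset Pt} {r : ℕ} (S : FlipSeq P r) : Fin r → Fin r → Prop :=
  Relation.ReflTransGen (fun a b => S.Arc a b ∨ S.Arc b a)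

/-- A solution `F` is normalized if the flips belonging to each weakly connected
component of `D_F` appear consecutively in `F`. -/
def FlipSeq.Normalized {P : Finset Pt} {r : ℕ} (S : FlipSeq P r) : Prop :=
  ∀ i p j : Fin r, i ≤ p → p ≤ j → S.SameComponent i j → S.SameComponent i p

/-- `S` is a solution to the Flip Distance instance `(Tinit, Tfinal, k)`: a valid
sequence of `k` flips transforming `Tinit` into `Tfinal` such that no valid sequence
of fewer flips does so, i.e. `k` is the flip distance. -/
def IsSolution {P : Finset Pt} (Tinit Tfinal : Triangulation P) (k : ℕ) (S : FlipSeq P k) : Prop :=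
  S.tri 0 = Tinit ∧ S.tri (Fin.last k) = Tfinal ∧
  ∀ (k' : ℕ) (S' : FlipSeq P k'), S'.tri 0 = Tinit → S'.tri (Fin.last k') = Tfinal → k ≤ k'

/-- Two distinct edges cross: they intersect at a point interior to both segments. -/
def EdgesCross (e e' : Edge) : Prop :=
  e ≠ e' ∧ ∃ x : Pt,
    (x ∈ convexHull ℝ (e : Set Pt) ∧ x ∉ (e : Set Pt)) ∧
    (x ∈ convexHull ℝ (e' : Set Pt) ∧ x ∉ (e' : Set Pt))

/-- The state of the nondeterministic algorithm: a current triangulation, a current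
edge, and a stack of edges. -/
structure AlgState (P : Finset Pt) where
  tri : Triangulation P
  cur : Edge
  stack : List Edge

/-- One action of the nondeterministic algorithm, labeled by `none` (no flip) or
`some f` (the flip performed). The five types of actions are:
(i) move to an edge sharing a triangle with the current edge;
(ii) flip the current edge and move to an edge that shared a triangle with it;
(iii) flip the current edge, push the created edge, and move to an edge that shared
a triangle with it;
(iv) flip the current edge and jump to the edge on the top of the stack;
(v) flip the current edge, jump to the top of the stack, and pop the stack. -/
inductive AlgStep {P : Finset Pt} : AlgState P → Option Flip → AlgState P → Prop
  | move (s : AlgState P) (e' : Edge) :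
      s.tri.ShareTriangle s.cur e' →
      AlgStep s none ⟨s.tri, e', s.stack⟩
  | flipMove (s : AlgState P) (f : Flip) (𝒯' : Triangulation P) (e' : Edge) :
      f.old = s.cur → FlipStep s.tri f 𝒯' → s.tri.ShareTriangle s.cur e' →
      AlgStep s (some f) ⟨𝒯', e', s.stack⟩
  | flipPush (s : AlgState P) (f : Flip) (𝒯' : Triangulation P) (e' : Edge) :
      f.old = s.cur → FlipStep s.tri f 𝒯' → s.tri.ShareTriangle s.cur e' →
      AlgStep s (some f) ⟨𝒯', e', f.new :: s.stack⟩
  | flipJump (s : AlgState P) (f : Flip) (𝒯' : Triangulation P) (e : Edge) (rest : List Edge) :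
      f.old = s.cur → FlipStep s.tri f 𝒯' → s.stack = e :: rest →
      AlgStep s (some f) ⟨𝒯', e, s.stack⟩
  | flipJumpPop (s : AlgState P) (f : Flip) (𝒯' : Triangulation P) (e : Edge) (rest : List Edge) :
      f.old = s.cur → FlipStep s.tri f 𝒯' → s.stack = e :: rest →
      AlgStep s (some f) ⟨𝒯', e, rest⟩

/-- A run of the nondeterministic algorithm: a sequence of actions transforming one
state into another. -/
inductive AlgRun {P : Finset Pt} : AlgState P → List (Option Flip) → AlgState P → Prop
  | nil (s : AlgState P) : AlgRun s [] s
  | cons {s s' s'' : AlgState P} {a : Option Flip} {l : List (Option Flip)} :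
      AlgStep s a s' → AlgRun s' l s'' → AlgRun s (a :: l) s''

/-- The permutation of indices corresponding to deleting the flip at position `s` and
appending it at the end: the new sequence at position `p` holds the old flip at index
`moveToEnd s p`. -/
def moveToEnd {r : ℕ} (s p : Fin r) : Fin r :=
  if (p : ℕ) < (s : ℕ) then p
  else if h2 : (p : ℕ) + 1 < r then ⟨(p : ℕ) + 1, h2⟩
  else s


set_option maxHeartbeats 1000000
noncomputable section
open Set


/-- signed area functional vanishing on line cd -/
def ell (c d x : Pt) : ℝ := (d.1 - c.1) * (x.2 - c.2) - (d.2 - c.2) * (x.1 - c.1)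

lemma ell_c (c d : Pt) : ell c d c = 0 := by simp [ell]
lemma ell_d (c d : Pt) : ell c d d = 0 := by simp [ell]; ring

lemma ell_combo4 (c d p q r t : Pt) (w1 w2 w3 w4 : ℝ) (hsum : w1 + w2 + w3 + w4 = 1) :
    ell c d (w1 • p + w2 • q + w3 • r + w4 • t)
      = w1 * ell c d p + w2 * ell c d q + w3 * ell c d r + w4 * ell c d t := by
  simp only [ell, Prod.fst_add, Prod.snd_add, Prod.smul_fst, Prod.smul_snd, smul_eq_mul]
  linear_combination ((d.1 - c.1) * c.2 - (d.2 - c.2) * c.1) * hsum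

lemma ell_combo3 (c d p q r : Pt) (w1 w2 w3 : ℝ) (hsum : w1 + w2 + w3 = 1) :
    ell c d (w1 • p + w2 • q + w3 • r)
      = w1 * ell c d p + w2 * ell c d q + w3 * ell c d r := by
  have := ell_combo4 c d p q r r w1 w2 w3 0 (by linarith)
  simpa using this

lemma line_param {c d z : Pt} (hcd : c ≠ d) (hz : ell c d z = 0) :
    ∃ s : ℝ, z = c + s • (d - c) := by
  have h : d.1 - c.1 ≠ 0 ∨ d.2 - c.2 ≠ 0 := by
    by_contra h
    push_neg at h
    exact hcd (Prod.ext (by linarith [h.1]) (by linarith [h.2])).symm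
  have hz' : (d.1 - c.1) * (z.2 - c.2) = (d.2 - c.2) * (z.1 - c.1) := by
    simp only [ell] at hz; linarith
  rcases h with h | h
  · refine ⟨(z.1 - c.1) / (d.1 - c.1), ?_⟩
    refine Prod.ext ?_ ?_ <;>
      simp only [Prod.fst_add, Prod.snd_add, Prod.smul_fst, Prod.smul_snd, Prod.fst_sub,
        Prod.snd_sub, smul_eq_mul]
    · field_simp
      ring
    · field_simp
      linear_combination hz'
  · refine ⟨(z.2 - c.2) / (d.2 - c.2), ?_⟩
    refine Prod.ext ?_ ?_ <;>
      simp only [Prod.fst_add, Prod.snd_add, Prod.smul_fst, Prod.smul_snd, Prod.fst_sub,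
        Prod.snd_sub, smul_eq_mul]
    · field_simp
      linear_combination -hz'
    · field_simp
      ring

lemma collinear_of_ell_eq_zero {c d a : Pt} (hcd : c ≠ d) (h : ell c d a = 0) :
    Collinear ℝ ({c, d, a} : Set Pt) := by
  rw [collinear_iff_of_mem (show c ∈ ({c,d,a} : Set Pt) by simp)]
  refine ⟨d - c, ?_⟩
  intro p hp
  simp only [mem_insert_iff, mem_singleton_iff] at hp
  rcases hp with rfl | rfl | rfl
  · exact ⟨0, by simp⟩
  · exact ⟨1, by simp⟩
  · obtain ⟨s, hs⟩ := line_param hcd h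
    exact ⟨s, by rw [hs]; rw [vadd_eq_add]; abel⟩

lemma ell_ne_zero_of_not_collinear {c d a : Pt} (hcd : c ≠ d)
    (h : ¬ Collinear ℝ ({c, d, a} : Set Pt)) : ell c d a ≠ 0 :=
  fun h0 => h (collinear_of_ell_eq_zero hcd h0)

lemma combo3_mem_hull (p q r : Pt) {w1 w2 w3 : ℝ} (h1 : 0 ≤ w1) (h2 : 0 ≤ w2) (h3 : 0 ≤ w3)
    (hsum : w1 + w2 + w3 = 1) : w1 • p + w2 • q + w3 • r ∈ convexHull ℝ ({p, q, r} : Set Pt) := by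
  have := (convex_convexHull ℝ ({p, q, r} : Set Pt)).sum_mem (t := Finset.univ)
    (w := ![w1, w2, w3]) (z := ![p, q, r])
    (by intro i _; fin_cases i <;> simpa)
    (by simp [Fin.sum_univ_three, hsum])
    (by intro i _; fin_cases i <;> exact subset_convexHull ℝ _ (by simp))
  simpa [Fin.sum_univ_three] using this

lemma combo4_mem_hull (p q r t : Pt) {w1 w2 w3 w4 : ℝ} (h1 : 0 ≤ w1) (h2 : 0 ≤ w2) (h3 : 0 ≤ w3)
    (h4 : 0 ≤ w4) (hsum : w1 + w2 + w3 + w4 = 1) :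
    w1 • p + w2 • q + w3 • r + w4 • t ∈ convexHull ℝ ({p, q, r, t} : Set Pt) := by
  have := (convex_convexHull ℝ ({p, q, r, t} : Set Pt)).sum_mem (t := Finset.univ)
    (w := ![w1, w2, w3, w4]) (z := ![p, q, r, t])
    (by intro i _; fin_cases i <;> simpa)
    (by simp [Fin.sum_univ_four, hsum])
    (by intro i _; fin_cases i <;> exact subset_convexHull ℝ _ (by simp))
  simpa [Fin.sum_univ_four] using this

lemma mem_hull3_iff {p q r x : Pt} :
    x ∈ convexHull ℝ ({p, q, r} : Set Pt) ↔
      ∃ w1 w2 w3 : ℝ, 0 ≤ w1 ∧ 0 ≤ w2 ∧ 0 ≤ w3 ∧ w1 + w2 + w3 = 1 ∧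
        w1 • p + w2 • q + w3 • r = x := by
  constructor
  · intro hx
    have hs : ({p, q, r} : Set Pt) = insert p ({q, r} : Set Pt) := rfl
    rw [hs, convexHull_insert ⟨q, by simp⟩, mem_convexJoin] at hx
    obtain ⟨a, ha, b, hb, hab⟩ := hx
    rw [mem_singleton_iff] at ha
    subst ha
    rw [convexHull_pair] at hb
    obtain ⟨u, v, hu, hv, huv, rfl⟩ := hb
    obtain ⟨θ, φ, hθ, hφ, hθφ, rfl⟩ := hab
    exact ⟨θ, φ * u, φ * v, hθ, by positivity, by positivity, by nlinarith,
      by simp [smul_add, smul_smul]; abel⟩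
  · rintro ⟨w1, w2, w3, h1, h2, h3, hsum, rfl⟩
    exact combo3_mem_hull p q r h1 h2 h3 hsum

lemma mem_hull4_iff {a b c d x : Pt} :
    x ∈ convexHull ℝ ({a, b, c, d} : Set Pt) ↔
      ∃ w1 w2 w3 w4 : ℝ, 0 ≤ w1 ∧ 0 ≤ w2 ∧ 0 ≤ w3 ∧ 0 ≤ w4 ∧ w1 + w2 + w3 + w4 = 1 ∧
        w1 • a + w2 • b + w3 • c + w4 • d = x := by
  constructor
  · intro hx
    rw [← convexJoin_segments, mem_convexJoin] at hx
    obtain ⟨m, hm, n, hn, hx⟩ := hx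
    obtain ⟨t, s, ht, hs, hts, rfl⟩ := hm
    obtain ⟨u, v, hu, hv, huv, rfl⟩ := hn
    obtain ⟨θ, φ, hθ, hφ, hθφ, rfl⟩ := hx
    refine ⟨θ * t, θ * s, φ * u, φ * v, by positivity, by positivity, by positivity, by positivity,
      by nlinarith, ?_⟩
    simp [smul_add, smul_smul]; abel
  · rintro ⟨w1, w2, w3, w4, h1, h2, h3, h4, hsum, rfl⟩
    exact combo4_mem_hull a b c d h1 h2 h3 h4 hsum

lemma finrank_plane : Module.finrank ℝ Pt = 2 := by
  simp [Pt]

/-- an affine basis from a noncollinear triple -/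
lemma triangle_basis {p q r : Pt} (h : ¬ Collinear ℝ ({p, q, r} : Set Pt)) :
    ∃ B : AffineBasis (Fin 3) ℝ Pt, B = ![p, q, r] := by
  have hind : AffineIndependent ℝ ![p, q, r] := affineIndependent_iff_not_collinear_set.2 h
  have htot : affineSpan ℝ (range ![p, q, r]) = ⊤ := by
    refine hind.affineSpan_eq_top_iff_card_eq_finrank_add_one.2 ?_
    simp [finrank_plane]
  exact ⟨⟨![p, q, r], hind, htot⟩, rfl⟩

lemma triangle_pos_combo_mem_interior {p q r : Pt} (h : ¬ Collinear ℝ ({p, q, r} : Set Pt))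
    {w1 w2 w3 : ℝ} (h1 : 0 < w1) (h2 : 0 < w2) (h3 : 0 < w3) (hsum : w1 + w2 + w3 = 1) :
    w1 • p + w2 • q + w3 • r ∈ interior (convexHull ℝ ({p, q, r} : Set Pt)) := by
  obtain ⟨B, hB⟩ := triangle_basis h
  have hrange : range (B : Fin 3 → Pt) = ({p, q, r} : Set Pt) := by
    rw [hB]
    simp only [Matrix.range_cons, Matrix.range_empty, Set.singleton_union, insert_empty_eq,
      Set.union_insert, Set.union_singleton]
    ext z; simp; tauto
  have hx : w1 • p + w2 • q + w3 • r
      = Finset.univ.affineCombination ℝ (B : Fin 3 → Pt) ![w1, w2, w3] := by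
    rw [Finset.affineCombination_eq_linear_combination _ _ _ (by simp [Fin.sum_univ_three, hsum])]
    rw [hB]
    simp [Fin.sum_univ_three]
  rw [← hrange, B.interior_convexHull]
  intro i
  rw [hx, B.coord_apply_combination_of_mem (Finset.mem_univ i)
    (by simp [Fin.sum_univ_three, hsum])]
  fin_cases i <;> simpa

lemma triangle_interior_nonempty {p q r : Pt} (h : ¬ Collinear ℝ ({p, q, r} : Set Pt)) :
    (interior (convexHull ℝ ({p, q, r} : Set Pt))).Nonempty :=
  ⟨_, triangle_pos_combo_mem_interior h (by norm_num) (by norm_num) (by norm_num)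
    (by norm_num : (3:ℝ)⁻¹ + 3⁻¹ + 3⁻¹ = 1)⟩

/-- near any point of a convex set with nonempty interior, inside any open set containing it,
there is an interior point -/
lemma near_interior {s : Set Pt} (hs : Convex ℝ s) {y : Pt} (hy : y ∈ interior s) {x : Pt}
    (hx : x ∈ s) {U : Set Pt} (hU : IsOpen U) (hxU : x ∈ U) : (U ∩ interior s).Nonempty := by
  have hc : Continuous (fun t : ℝ => (1 - t) • x + t • y) := by continuity
  have h0 : (fun t : ℝ => (1 - t) • x + t • y) 0 = x := by simp
  have hev : ∀ᶠ t in nhds (0 : ℝ), ((1 - t) • x + t • y) ∈ U := by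
    have h2 := hc.continuousAt (x := 0)
    have h3 : U ∈ nhds ((1 - (0:ℝ)) • x + (0:ℝ) • y) := by
      simpa using hU.mem_nhds hxU
    exact h2.eventually_mem h3
  obtain ⟨δ, hδpos, hδ⟩ := Metric.eventually_nhds_iff.mp hev
  set t := min (δ / 2) (1 / 2) with ht
  have htpos : 0 < t := by positivity
  have ht1 : t ≤ 1 / 2 := min_le_right _ _
  have htU : ((1 - t) • x + t • y) ∈ U := by
    apply hδ
    rw [Real.dist_eq, sub_zero, abs_of_pos htpos]
    exact lt_of_le_of_lt (min_le_left _ _) (by linarith)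
  have hint : ((1 - t) • x + t • y) ∈ interior s :=
    hs.combo_closure_interior_mem_interior (subset_closure hx) hy (by linarith) htpos
      (by ring)
  exact ⟨_, htU, hint⟩

lemma pos4_mem_interior {a b c d : Pt} (hcda : ¬ Collinear ℝ ({c, d, a} : Set Pt))
    {w1 w2 w3 w4 : ℝ} (h1 : 0 < w1) (h2 : 0 < w2) (h3 : 0 < w3) (h4 : 0 < w4)
    (hsum : w1 + w2 + w3 + w4 = 1) :
    w1 • a + w2 • b + w3 • c + w4 • d ∈ interior (convexHull ℝ ({a, b, c, d} : Set Pt)) := by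
  have hsub : ({c, d, a} : Set Pt) ⊆ ({a, b, c, d} : Set Pt) := by intro z hz; simp at hz ⊢; tauto
  have hy : (3:ℝ)⁻¹ • c + (3:ℝ)⁻¹ • d + (3:ℝ)⁻¹ • a ∈
      interior (convexHull ℝ ({a, b, c, d} : Set Pt)) :=
    interior_mono (convexHull_mono hsub)
      (triangle_pos_combo_mem_interior hcda (by norm_num) (by norm_num) (by norm_num) (by norm_num))
  obtain ⟨ε, hε1, hεw1, hεw3, hεw4, hεlt⟩ :
      ∃ ε : ℝ, 0 < ε ∧ ε ≤ w1 ∧ ε ≤ w3 ∧ ε ≤ w4 ∧ ε < 1 := by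
    refine ⟨min w1 (min w3 w4), by positivity, min_le_left _ _,
      le_trans (min_le_right _ _) (min_le_left _ _),
      le_trans (min_le_right _ _) (min_le_right _ _), ?_⟩
    exact lt_of_le_of_lt (min_le_left _ _) (by linarith)
  have h1ε : (0:ℝ) < 1 - ε := by linarith
  have h1ε' : (1:ℝ) - ε ≠ 0 := ne_of_gt h1ε
  have hp : ((w1 - ε/3)/(1-ε)) • a + (w2/(1-ε)) • b + ((w3 - ε/3)/(1-ε)) • c
      + ((w4 - ε/3)/(1-ε)) • d ∈ convexHull ℝ ({a, b, c, d} : Set Pt) :=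
    combo4_mem_hull a b c d
      (div_nonneg (by linarith) (by linarith)) (div_nonneg (by linarith) (by linarith))
      (div_nonneg (by linarith) (by linarith)) (div_nonneg (by linarith) (by linarith))
      (by rw [← add_div, ← add_div, ← add_div,
        div_eq_one_iff_eq h1ε']; linarith)
  have hkey : w1 • a + w2 • b + w3 • c + w4 • d
      = ε • ((3:ℝ)⁻¹ • c + (3:ℝ)⁻¹ • d + (3:ℝ)⁻¹ • a)
        + (1-ε) • (((w1 - ε/3)/(1-ε)) • a + (w2/(1-ε)) • b + ((w3 - ε/3)/(1-ε)) • c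
          + ((w4 - ε/3)/(1-ε)) • d) := by
    match_scalars <;> field_simp <;> ring
  rw [hkey]
  exact (convex_convexHull ℝ _).combo_interior_closure_mem_interior hy
    (subset_closure hp) hε1 (by linarith) (by ring)

lemma quad_aux (a b c d : Pt) (hcd : c ≠ d)
    (hC : c ∉ convexHull ℝ ({a, b, d} : Set Pt))
    (hD : d ∉ convexHull ℝ ({a, b, c} : Set Pt))
    (hla : 0 < ell c d a) (hlb : ell c d b < 0) :
    (convexHull ℝ ({a, b, c, d} : Set Pt) ⊆
      convexHull ℝ ({c, d, a} : Set Pt) ∪ convexHull ℝ ({c, d, b} : Set Pt)) ∧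
    (∃ z ∈ segment ℝ a b, ∃ w1 w2 w3 w4 : ℝ, 0 < w1 ∧ 0 < w2 ∧ 0 < w3 ∧ 0 < w4 ∧
      w1 + w2 + w3 + w4 = 1 ∧ w1 • a + w2 • b + w3 • c + w4 • d = z) := by
  have hdab : (0:ℝ) < ell c d a - ell c d b := by linarith
  obtain ⟨t, ht0, ht1, htell⟩ :
      ∃ t : ℝ, 0 < t ∧ t < 1 ∧ t * ell c d a + (1-t) * ell c d b = 0 := by
    refine ⟨-ell c d b / (ell c d a - ell c d b), by apply div_pos <;> linarith,
      by rw [div_lt_one hdab]; linarith, by field_simp; ring⟩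
  have ht1' : (0:ℝ) < 1 - t := by linarith
  set z := t • a + (1-t) • b with hzdef
  have hzell : ell c d z = 0 := by
    have h := ell_combo3 c d a b b t (1-t) 0 (by ring)
    simp only [zero_smul, add_zero, zero_mul] at h
    rw [hzdef, h]
    linarith [htell]
  obtain ⟨s, hs⟩ := line_param hcd hzell
  have hz1 : t * a.1 + (1-t) * b.1 = c.1 + s * (d.1 - c.1) := by
    have := congrArg Prod.fst hs
    simpa [hzdef] using this
  have hz2 : t * a.2 + (1-t) * b.2 = c.2 + s * (d.2 - c.2) := by
    have := congrArg Prod.snd hs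
    simpa [hzdef] using this
  have hzcd : z = (1-s) • c + s • d := by
    rw [hs]; module
  have hs1 : s ≤ 1 := by
    by_contra hsgt
    push_neg at hsgt
    have hsg0 : (0:ℝ) < s := by linarith
    have hsne : s ≠ 0 := ne_of_gt hsg0
    apply hD
    rw [mem_hull3_iff]
    refine ⟨s⁻¹ * t, s⁻¹ * (1-t), 1 - s⁻¹,
      mul_nonneg (by positivity) (le_of_lt ht0), mul_nonneg (by positivity) (by linarith), ?_,
      by field_simp; ring, ?_⟩
    · have : s⁻¹ < 1 := by rw [inv_lt_one_iff₀]; right; exact hsgt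
      linarith
    · refine Prod.ext ?_ ?_ <;>
        simp only [Prod.fst_add, Prod.snd_add, Prod.smul_fst, Prod.smul_snd, smul_eq_mul]
      · field_simp
        linear_combination hz1
      · field_simp
        linear_combination hz2
  have hs0 : 0 ≤ s := by
    by_contra hslt
    push_neg at hslt
    have h1s : (0:ℝ) < 1 - s := by linarith
    have h1sne : (1:ℝ) - s ≠ 0 := ne_of_gt h1s
    apply hC
    rw [mem_hull3_iff]
    refine ⟨t / (1-s), (1-t) / (1-s), -s / (1-s),
      div_nonneg (le_of_lt ht0) (le_of_lt h1s), div_nonneg (by linarith) (le_of_lt h1s),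
      div_nonneg (by linarith) (le_of_lt h1s), by field_simp; ring, ?_⟩
    · refine Prod.ext ?_ ?_ <;>
        simp only [Prod.fst_add, Prod.snd_add, Prod.smul_fst, Prod.smul_snd, smul_eq_mul]
      · field_simp
        linear_combination hz1
      · field_simp
        linear_combination hz2
  have hsne0 : s ≠ 0 := by
    rintro rfl
    apply hC
    rw [mem_hull3_iff]
    have hzc : z = c := by rw [hzcd]; module
    refine ⟨t, 1-t, 0, le_of_lt ht0, by linarith, le_refl _, by ring, ?_⟩
    rw [← hzc, hzdef]; module
  have hsne1 : s ≠ 1 := by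
    rintro rfl
    apply hD
    rw [mem_hull3_iff]
    have hzd : z = d := by rw [hzcd]; module
    refine ⟨t, 1-t, 0, le_of_lt ht0, by linarith, le_refl _, by ring, ?_⟩
    rw [← hzd, hzdef]; module
  have hs0' : 0 < s := lt_of_le_of_ne hs0 (Ne.symm hsne0)
  have hs1' : s < 1 := lt_of_le_of_ne hs1 hsne1
  have hla' : ell c d a ≠ 0 := ne_of_gt hla
  have hlb' : ell c d b ≠ 0 := ne_of_lt hlb
  constructor
  · -- covering
    intro x hx
    rw [mem_hull4_iff] at hx
    obtain ⟨α, β, γ, δ, hα, hβ, hγ, hδ, hsum, hcombo⟩ := hx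
    have hlx : ell c d x = α * ell c d a + β * ell c d b := by
      rw [← hcombo, ell_combo4 c d a b c d α β γ δ hsum, ell_c, ell_d]
      ring
    rcases le_or_gt 0 (ell c d x) with hge | hlt
    · left
      rw [mem_hull3_iff]
      rcases eq_or_lt_of_le hβ with hβ0 | hβpos
      · refine ⟨γ, δ, α, hγ, hδ, hα, by linarith, ?_⟩
        rw [← hcombo, ← hβ0]
        module
      · obtain ⟨k, hk0, hk1, hk2⟩ :
            ∃ k : ℝ, 0 ≤ k ∧ k * (1-t) = β ∧
              (α * ell c d a + β * ell c d b) / ell c d a + k * t = α := by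
          refine ⟨β / (1-t), div_nonneg hβ (by linarith), by field_simp, ?_⟩
          field_simp
          linear_combination β * htell
        have hA : 0 ≤ (α * ell c d a + β * ell c d b) / ell c d a := by
          rw [← hlx]; exact div_nonneg hge (le_of_lt hla)
        refine ⟨γ + k * (1-s), δ + k * s, (α * ell c d a + β * ell c d b) / ell c d a,
          add_nonneg hγ (mul_nonneg hk0 (by linarith)),
          add_nonneg hδ (mul_nonneg hk0 (by linarith)), hA, ?_, ?_⟩
        · have heq : γ + k * (1-s) + (δ + k * s) + (α * ell c d a + β * ell c d b) / ell c d a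
              = γ + δ + k * (1-t) + ((α * ell c d a + β * ell c d b) / ell c d a + k * t)
                - k + k := by ring
          rw [heq, hk1, hk2]; linarith
        · calc (γ + k * (1-s)) • c + (δ + k * s) • d
              + ((α * ell c d a + β * ell c d b) / ell c d a) • a
              = ((α * ell c d a + β * ell c d b) / ell c d a) • a + k • ((1-s) • c + s • d)
                + γ • c + δ • d := by module
            _ = ((α * ell c d a + β * ell c d b) / ell c d a) • a + k • (t • a + (1-t) • b)
                + γ • c + δ • d := by rw [← hzcd, ← hzdef]
            _ = ((α * ell c d a + β * ell c d b) / ell c d a + k * t) • a + (k * (1-t)) • b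
                + γ • c + δ • d := by module
            _ = α • a + β • b + γ • c + δ • d := by rw [hk1, hk2]
            _ = x := hcombo
    · right
      rw [mem_hull3_iff]
      rcases eq_or_lt_of_le hα with hα0 | hαpos
      · refine ⟨γ, δ, β, hγ, hδ, hβ, by linarith, ?_⟩
        rw [← hcombo, ← hα0]
        module
      · obtain ⟨k, hk0, hk1, hk2⟩ :
            ∃ k : ℝ, 0 ≤ k ∧ k * t = α ∧
              (α * ell c d a + β * ell c d b) / ell c d b + k * (1-t) = β := by
          refine ⟨α / t, div_nonneg hα (le_of_lt ht0), by field_simp, ?_⟩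
          field_simp
          linear_combination α * htell
        have hA : 0 ≤ (α * ell c d a + β * ell c d b) / ell c d b := by
          rw [← hlx, ← neg_div_neg_eq]
          exact div_nonneg (by linarith) (by linarith)
        refine ⟨γ + k * (1-s), δ + k * s, (α * ell c d a + β * ell c d b) / ell c d b,
          add_nonneg hγ (mul_nonneg hk0 (by linarith)),
          add_nonneg hδ (mul_nonneg hk0 (by linarith)), hA, ?_, ?_⟩
        · have heq : γ + k * (1-s) + (δ + k * s) + (α * ell c d a + β * ell c d b) / ell c d b
              = γ + δ + k * t + ((α * ell c d a + β * ell c d b) / ell c d b + k * (1-t))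
                - k + k := by ring
          rw [heq, hk1, hk2]; linarith
        · calc (γ + k * (1-s)) • c + (δ + k * s) • d
              + ((α * ell c d a + β * ell c d b) / ell c d b) • b
              = ((α * ell c d a + β * ell c d b) / ell c d b) • b + k • ((1-s) • c + s • d)
                + γ • c + δ • d := by module
            _ = ((α * ell c d a + β * ell c d b) / ell c d b) • b + k • (t • a + (1-t) • b)
                + γ • c + δ • d := by rw [← hzcd, ← hzdef]
            _ = (k * t) • a + ((α * ell c d a + β * ell c d b) / ell c d b + k * (1-t)) • b
                + γ • c + δ • d := by module
            _ = α • a + β • b + γ • c + δ • d := by rw [hk1, hk2]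
            _ = x := hcombo
  · refine ⟨z, ⟨t, 1-t, le_of_lt ht0, by linarith, by ring, by rw [hzdef]⟩,
      t/2, (1-t)/2, (1-s)/2, s/2, by linarith, by linarith, by linarith, by linarith,
      by ring, ?_⟩
    have heq : (t/2) • a + ((1-t)/2) • b + ((1-s)/2) • c + (s/2) • d
        = (2⁻¹ : ℝ) • (t • a + (1-t) • b) + (2⁻¹ : ℝ) • ((1-s) • c + s • d) := by module
    rw [heq, ← hzdef, ← hzcd]
    module

lemma quad_main (a b c d : Pt) (hcd : c ≠ d)
    (hC : c ∉ convexHull ℝ ({a, b, d} : Set Pt))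
    (hD : d ∉ convexHull ℝ ({a, b, c} : Set Pt))
    (hcda : ¬ Collinear ℝ ({c, d, a} : Set Pt))
    (hcdb : ¬ Collinear ℝ ({c, d, b} : Set Pt))
    (hdisj : interior (convexHull ℝ ({c, d, a} : Set Pt))
      ∩ interior (convexHull ℝ ({c, d, b} : Set Pt)) = ∅) :
    (convexHull ℝ ({a, b, c, d} : Set Pt)
      = convexHull ℝ ({c, d, a} : Set Pt) ∪ convexHull ℝ ({c, d, b} : Set Pt)) ∧
    (∃ z ∈ segment ℝ a b, z ∈ interior (convexHull ℝ ({a, b, c, d} : Set Pt))) := by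
  have hla := ell_ne_zero_of_not_collinear hcd hcda
  have hlb := ell_ne_zero_of_not_collinear hcd hcdb
  have hopp : ell c d a * ell c d b < 0 := by
    rcases (mul_ne_zero hla hlb).lt_or_gt with h | h
    · exact h
    exfalso
    obtain ⟨B, hB3⟩ := triangle_basis hcdb
    have husum : B.coord 0 a + B.coord 1 a + B.coord 2 a = 1 := by
      have h1 := B.sum_coord_apply_eq_one a
      rwa [Fin.sum_univ_three] at h1
    have hu : B.coord 0 a • c + B.coord 1 a • d + B.coord 2 a • b = a := by
      have h1 := B.affineCombination_coord_eq_self a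
      rw [Finset.affineCombination_eq_linear_combination _ _ _
        (B.sum_coord_apply_eq_one a)] at h1
      rw [Fin.sum_univ_three] at h1
      rw [hB3] at h1
      simpa using h1
    set u1 := B.coord 0 a with hu1d
    set u2 := B.coord 1 a with hu2d
    set u3 := B.coord 2 a with hu3d
    have hell : ell c d a = u3 * ell c d b := by
      have h2 := ell_combo3 c d c d b u1 u2 u3 husum
      rw [hu] at h2
      rw [h2, ell_c, ell_d]
      ring
    have hu3 : 0 < u3 := by
      rcases mul_pos_iff.mp h with ⟨h1, h2⟩ | ⟨h1, h2⟩
      · nlinarith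
      · nlinarith
    obtain ⟨ε, hε0, hε8, hεu1, hεu2⟩ :
        ∃ ε : ℝ, 0 < ε ∧ ε ≤ 1/8 ∧ ε * |u1| ≤ 1/8 ∧ ε * |u2| ≤ 1/8 := by
      have hM : (0:ℝ) < 1 + |u1| + |u2| := by positivity
      refine ⟨1/(8*(1 + |u1| + |u2|)), by positivity, ?_, ?_, ?_⟩
      · rw [div_le_div_iff₀ (by positivity) (by norm_num)]
        nlinarith [abs_nonneg u1, abs_nonneg u2]
      · rw [div_mul_eq_mul_div, div_le_div_iff₀ (by positivity) (by norm_num)]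
        nlinarith [abs_nonneg u1, abs_nonneg u2]
      · rw [div_mul_eq_mul_div, div_le_div_iff₀ (by positivity) (by norm_num)]
        nlinarith [abs_nonneg u1, abs_nonneg u2]
    have hx1 : ((1-ε)/2) • c + ((1-ε)/2) • d + ε • a
        ∈ interior (convexHull ℝ ({c, d, a} : Set Pt)) :=
      triangle_pos_combo_mem_interior hcda (by linarith) (by linarith) hε0 (by ring)
    have hx2 : ((1-ε)/2) • c + ((1-ε)/2) • d + ε • a
        ∈ interior (convexHull ℝ ({c, d, b} : Set Pt)) := by
      have hrw : ((1-ε)/2) • c + ((1-ε)/2) • d + ε • a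
          = ((1-ε)/2 + ε*u1) • c + ((1-ε)/2 + ε*u2) • d + (ε*u3) • b := by
        rw [← hu]; module
      rw [hrw]
      have hb1 : -(ε*|u1|) ≤ ε*u1 := by nlinarith [neg_abs_le u1]
      have hb2 : -(ε*|u2|) ≤ ε*u2 := by nlinarith [neg_abs_le u2]
      refine triangle_pos_combo_mem_interior hcdb (by linarith) (by linarith)
        (mul_pos hε0 hu3) (by linear_combination ε * husum)
    have : ((1-ε)/2) • c + ((1-ε)/2) • d + ε • a ∈ (∅ : Set Pt) := by
      rw [← hdisj]; exact ⟨hx1, hx2⟩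
    exact this
  have hsub1 : ({c, d, a} : Set Pt) ⊆ ({a, b, c, d} : Set Pt) := by
    intro z hz; simp at hz ⊢; tauto
  have hsub2 : ({c, d, b} : Set Pt) ⊆ ({a, b, c, d} : Set Pt) := by
    intro z hz; simp at hz ⊢; tauto
  rcases mul_neg_iff.mp hopp with ⟨hpos, hneg⟩ | ⟨hneg, hpos⟩
  · obtain ⟨hcov, z, hzseg, w1, w2, w3, w4, k1, k2, k3, k4, hsum, hcombo⟩ :=
      quad_aux a b c d hcd hC hD hpos hneg
    refine ⟨Subset.antisymm hcov
      (union_subset (convexHull_mono hsub1) (convexHull_mono hsub2)), z, hzseg, ?_⟩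
    rw [← hcombo]
    exact pos4_mem_interior hcda k1 k2 k3 k4 hsum
  · have e1 : ({b, a, d} : Set Pt) = ({a, b, d} : Set Pt) := Set.insert_comm b a {d}
    have e2 : ({b, a, c} : Set Pt) = ({a, b, c} : Set Pt) := Set.insert_comm b a {c}
    have e3 : ({b, a, c, d} : Set Pt) = ({a, b, c, d} : Set Pt) := Set.insert_comm b a {c, d}
    obtain ⟨hcov, z, hzseg, w1, w2, w3, w4, k1, k2, k3, k4, hsum, hcombo⟩ :=
      quad_aux b a c d hcd (e1 ▸ hC) (e2 ▸ hD) hpos hneg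
    rw [e3] at hcov
    constructor
    · refine Subset.antisymm ?_
        (union_subset (convexHull_mono hsub1) (convexHull_mono hsub2))
    -- hcov : hull {a,b,c,d} ⊆ hull {c,d,b} ∪ hull {c,d,a}
      intro x hx
      rcases hcov hx with h | h
      · exact Or.inr h
      · exact Or.inl h
    · refine ⟨z, segment_symm ℝ b a ▸ hzseg, ?_⟩
      rw [← e3, ← hcombo]
      exact pos4_mem_interior hcdb k1 k2 k3 k4 hsum

open Set in
lemma tri_int_nonempty {P : Finset Pt} (X : Triangulation P) {T : Finset Pt}
    (hT : T ∈ X.triangles) : (interior (convexHull ℝ (↑T : Set Pt))).Nonempty := by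
  obtain ⟨x, y, z, hxy, hxz, hyz, hrep⟩ := Finset.card_eq_three.mp (X.card_eq T hT)
  have hnc := X.not_collinear T hT
  rw [hrep] at hnc ⊢
  have hcoe : (↑({x, y, z} : Finset Pt) : Set Pt) = ({x, y, z} : Set Pt) := by simp
  rw [hcoe] at hnc ⊢
  exact triangle_interior_nonempty hnc

open Set in
/-- probe: if `x` is in the hull of a triangle `T` of `X` and in an open set `U`, then `U` meets
the interior of the hull of `T`. -/
lemma probe {P : Finset Pt} (X : Triangulation P) {T : Finset Pt} (hT : T ∈ X.triangles)
    {x : Pt} (hx : x ∈ convexHull ℝ (↑T : Set Pt)) {U : Set Pt} (hU : IsOpen U) (hxU : x ∈ U) :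
    (U ∩ interior (convexHull ℝ (↑T : Set Pt))).Nonempty := by
  obtain ⟨y, hy⟩ := tri_int_nonempty X hT
  exact near_interior (convex_convexHull ℝ _) hy hx hU hxU

open Set in
lemma step_geometry {P : Finset Pt} {A B : Triangulation P} {f : Flip} (hf : FlipStep A f B) :
    ∃ (T₁ T₂ : Finset Pt) (p q u v : Pt),
      T₁ ∈ A.triangles ∧ T₂ ∈ A.triangles ∧ T₁ ≠ T₂ ∧
      f.old ⊆ T₁ ∧ f.old ⊆ T₂ ∧ (∀ T ∈ A.triangles, f.old ⊆ T → T = T₁ ∨ T = T₂) ∧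
      B.triangles = (A.triangles \ {T₁, T₂}) ∪ f.old.image (fun x => insert x f.new) ∧
      f.old.card = 2 ∧ (T₁ ∪ T₂).card = 4 ∧
      (∀ x ∈ T₁ ∪ T₂, x ∉ convexHull ℝ (((T₁ ∪ T₂).erase x : Finset Pt) : Set Pt)) ∧
      f.new = (T₁ ∪ T₂) \ f.old ∧
      f.old = {p, q} ∧ f.new = {u, v} ∧ T₁ = {p, q, u} ∧ T₂ = {p, q, v} ∧
      p ≠ q ∧ u ≠ v ∧ u ∉ f.old ∧ v ∉ f.old ∧ p ∉ f.new ∧ q ∉ f.new ∧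
      T₁ ∪ T₂ = {p, q, u, v} ∧
      insert p f.new ∈ B.triangles ∧ insert q f.new ∈ B.triangles ∧
      convexHull ℝ (↑(T₁ ∪ T₂) : Set Pt)
        = convexHull ℝ (↑T₁ : Set Pt) ∪ convexHull ℝ (↑T₂ : Set Pt) ∧
      convexHull ℝ (↑(T₁ ∪ T₂) : Set Pt)
        = convexHull ℝ (↑(insert p f.new) : Set Pt) ∪ convexHull ℝ (↑(insert q f.new) : Set Pt) ∧
      (∃ z, z ∈ convexHull ℝ (↑f.new : Set Pt)
        ∧ z ∈ interior (convexHull ℝ (↑(T₁ ∪ T₂) : Set Pt))) := by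
  obtain ⟨T₁, hT₁, T₂, hT₂, hTne, hc2, hs1, hs2, hex, hc4, hpos, hnew, htri⟩ := hf
  obtain ⟨p, q, hpq, hfo⟩ := Finset.card_eq_two.mp hc2
  have hud : (T₁ \ f.old).card = 1 := by rw [Finset.card_sdiff_of_subset hs1, hc2, (A.card_eq T₁ hT₁)]
  have hvd : (T₂ \ f.old).card = 1 := by rw [Finset.card_sdiff_of_subset hs2, hc2, (A.card_eq T₂ hT₂)]
  obtain ⟨u, hu⟩ := Finset.card_eq_one.mp hud
  obtain ⟨v, hv⟩ := Finset.card_eq_one.mp hvd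
  have humem : u ∈ T₁ \ f.old := by rw [hu]; exact Finset.mem_singleton_self u
  have hvmem : v ∈ T₂ \ f.old := by rw [hv]; exact Finset.mem_singleton_self v
  have huT₁ : u ∈ T₁ := (Finset.mem_sdiff.mp humem).1
  have hvT₂ : v ∈ T₂ := (Finset.mem_sdiff.mp hvmem).1
  have huold : u ∉ f.old := (Finset.mem_sdiff.mp humem).2
  have hvold : v ∉ f.old := (Finset.mem_sdiff.mp hvmem).2
  have hup : u ≠ p := fun h => huold (by rw [hfo, h]; simp)
  have huq : u ≠ q := fun h => huold (by rw [hfo, h]; simp)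
  have hvp : v ≠ p := fun h => hvold (by rw [hfo, h]; simp)
  have hvq : v ≠ q := fun h => hvold (by rw [hfo, h]; simp)
  have hT₁e : T₁ = {p, q, u} := by
    have h1 : T₁ = f.old ∪ (T₁ \ f.old) := (Finset.union_sdiff_of_subset hs1).symm
    rw [h1, hu, hfo]
    ext w; simp [or_assoc]
  have hT₂e : T₂ = {p, q, v} := by
    have h1 : T₂ = f.old ∪ (T₂ \ f.old) := (Finset.union_sdiff_of_subset hs2).symm
    rw [h1, hv, hfo]
    ext w; simp [or_assoc]
  have hQ : T₁ ∪ T₂ = {p, q, u, v} := by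
    rw [hT₁e, hT₂e]; ext w; simp <;> tauto
  have huv : u ≠ v := by
    intro h
    rw [hQ, h] at hc4
    have h1 : ({p, q, v, v} : Finset Pt) = {p, q, v} := by ext w; simp <;> tauto
    rw [h1] at hc4
    have h2 : ({p, q, v} : Finset Pt).card ≤ 3 := by
      apply le_trans (Finset.card_insert_le _ _)
      apply Nat.succ_le_succ
      apply le_trans (Finset.card_insert_le _ _)
      simp
    omega
  have hfn : f.new = {u, v} := by
    rw [hnew, hQ, hfo]
    ext w
    simp only [Finset.mem_sdiff, Finset.mem_insert, Finset.mem_singleton]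
    constructor
    · rintro ⟨h1 | h1 | h1 | h1, h2⟩ <;> tauto
    · rintro (rfl | rfl)
      · exact ⟨by tauto, by simp [hup, huq]⟩
      · exact ⟨by tauto, by simp [hvp, hvq]⟩
  have hfn' : f.new = {u, v} := hfn
  have hpnew : p ∉ f.new := by rw [hfn]; simp [Ne.symm hup, Ne.symm hvp]
  have hqnew : q ∉ f.new := by rw [hfn]; simp [Ne.symm huq, Ne.symm hvq]
  have hNp : insert p f.new ∈ B.triangles := by
    rw [htri]
    apply Finset.mem_union_right
    exact Finset.mem_image.mpr ⟨p, by rw [hfo]; simp, rfl⟩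
  have hNq : insert q f.new ∈ B.triangles := by
    rw [htri]
    apply Finset.mem_union_right
    exact Finset.mem_image.mpr ⟨q, by rw [hfo]; simp, rfl⟩
  have hNpq : insert p f.new ≠ insert q f.new := by
    intro h
    have : p ∈ insert q f.new := h ▸ Finset.mem_insert_self p f.new
    rcases Finset.mem_insert.mp this with h1 | h1
    · exact hpq h1
    · exact hpnew h1
  -- set-level conversions
  have hQs : (↑(T₁ ∪ T₂) : Set Pt) = ({u, v, p, q} : Set Pt) := by
    rw [hQ]; simp only [Finset.coe_insert, Finset.coe_singleton]; ext w; simp <;> tauto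
  have hT₁s : (↑T₁ : Set Pt) = ({p, q, u} : Set Pt) := by
    rw [hT₁e]; simp
  have hT₂s : (↑T₂ : Set Pt) = ({p, q, v} : Set Pt) := by
    rw [hT₂e]; simp
  have hNps : (↑(insert p f.new) : Set Pt) = ({u, v, p} : Set Pt) := by
    rw [hfn]; simp only [Finset.coe_insert, Finset.coe_singleton]; ext w; simp <;> tauto
  have hNqs : (↑(insert q f.new) : Set Pt) = ({u, v, q} : Set Pt) := by
    rw [hfn]; simp only [Finset.coe_insert, Finset.coe_singleton]; ext w; simp <;> tauto
  have hQmem : ∀ x, x ∈ ({p, q, u, v} : Finset Pt) → x ∈ T₁ ∪ T₂ := fun x hx => by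
    rw [hQ]; exact hx
  -- convex position converted
  have hposP : p ∉ convexHull ℝ ({q, u, v} : Set Pt) := by
    have hmain := hpos p (hQmem p (by simp))
    have h2fin : (T₁ ∪ T₂).erase p = ({q, u, v} : Finset Pt) := by
      rw [hQ]
      ext w
      simp only [Finset.mem_erase, Finset.mem_insert, Finset.mem_singleton]
      constructor
      · rintro ⟨h2, h1⟩
        rcases h1 with h | h | h | h
        exacts [absurd h h2, Or.inl h, Or.inr (Or.inl h), Or.inr (Or.inr h)]
      · intro h1
        refine ⟨fun hw => ?_, by tauto⟩
        subst hw
        rcases h1 with h | h | h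
        exacts [hpq h, hup h.symm, hvp h.symm]
    have h2 : ((T₁ ∪ T₂).erase p : Set Pt) = ({q, u, v} : Set Pt) := by
      rw [h2fin]; simp
    rw [h2] at hmain
    exact hmain
  have hposQ : q ∉ convexHull ℝ ({p, u, v} : Set Pt) := by
    have hmain := hpos q (hQmem q (by simp))
    have h2fin : (T₁ ∪ T₂).erase q = ({p, u, v} : Finset Pt) := by
      rw [hQ]
      ext w
      simp only [Finset.mem_erase, Finset.mem_insert, Finset.mem_singleton]
      constructor
      · rintro ⟨h2, h1⟩
        rcases h1 with h | h | h | h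
        exacts [Or.inl h, absurd h h2, Or.inr (Or.inl h), Or.inr (Or.inr h)]
      · intro h1
        refine ⟨fun hw => ?_, by tauto⟩
        subst hw
        rcases h1 with h | h | h
        exacts [hpq h.symm, huq h.symm, hvq h.symm]
    have h2 : ((T₁ ∪ T₂).erase q : Set Pt) = ({p, u, v} : Set Pt) := by
      rw [h2fin]; simp
    rw [h2] at hmain
    exact hmain
  have hposU : u ∉ convexHull ℝ ({p, q, v} : Set Pt) := by
    have hmain := hpos u (hQmem u (by simp))
    have h2fin : (T₁ ∪ T₂).erase u = ({p, q, v} : Finset Pt) := by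
      rw [hQ]
      ext w
      simp only [Finset.mem_erase, Finset.mem_insert, Finset.mem_singleton]
      constructor
      · rintro ⟨h2, h1⟩
        rcases h1 with h | h | h | h
        exacts [Or.inl h, Or.inr (Or.inl h), absurd h h2, Or.inr (Or.inr h)]
      · intro h1
        refine ⟨fun hw => ?_, by tauto⟩
        subst hw
        rcases h1 with h | h | h
        exacts [hup h, huq h, huv h]
    have h2 : ((T₁ ∪ T₂).erase u : Set Pt) = ({p, q, v} : Set Pt) := by
      rw [h2fin]; simp
    rw [h2] at hmain
    exact hmain
  have hposV : v ∉ convexHull ℝ ({p, q, u} : Set Pt) := by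
    have hmain := hpos v (hQmem v (by simp))
    have h2fin : (T₁ ∪ T₂).erase v = ({p, q, u} : Finset Pt) := by
      rw [hQ]
      ext w
      simp only [Finset.mem_erase, Finset.mem_insert, Finset.mem_singleton]
      constructor
      · rintro ⟨h2, h1⟩
        rcases h1 with h | h | h | h
        exacts [Or.inl h, Or.inr (Or.inl h), Or.inr (Or.inr h), absurd h h2]
      · intro h1
        refine ⟨fun hw => ?_, by tauto⟩
        subst hw
        rcases h1 with h | h | h
        exacts [hvp h, hvq h, huv h.symm]
    have h2 : ((T₁ ∪ T₂).erase v : Set Pt) = ({p, q, u} : Set Pt) := by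
      rw [h2fin]; simp
    rw [h2] at hmain
    exact hmain
  have hposP' : p ∉ convexHull ℝ ({u, v, q} : Set Pt) := by
    have he : ({u, v, q} : Set Pt) = ({q, u, v} : Set Pt) := by ext w; simp <;> tauto
    rw [he]; exact hposP
  have hposQ' : q ∉ convexHull ℝ ({u, v, p} : Set Pt) := by
    have he : ({u, v, p} : Set Pt) = ({p, u, v} : Set Pt) := by ext w; simp <;> tauto
    rw [he]; exact hposQ
  -- non-collinearity
  have hncT₁ : ¬ Collinear ℝ ({p, q, u} : Set Pt) := by
    have := A.not_collinear T₁ hT₁; rwa [hT₁s] at this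
  have hncT₂ : ¬ Collinear ℝ ({p, q, v} : Set Pt) := by
    have := A.not_collinear T₂ hT₂; rwa [hT₂s] at this
  have hncNp : ¬ Collinear ℝ ({u, v, p} : Set Pt) := by
    have := B.not_collinear _ hNp; rwa [hNps] at this
  have hncNq : ¬ Collinear ℝ ({u, v, q} : Set Pt) := by
    have := B.not_collinear _ hNq; rwa [hNqs] at this
  -- interior disjointness
  have hdisjT : interior (convexHull ℝ ({p, q, u} : Set Pt))
      ∩ interior (convexHull ℝ ({p, q, v} : Set Pt)) = ∅ := by
    have := A.interiors_disjoint T₁ hT₁ T₂ hT₂ hTne; rwa [hT₁s, hT₂s] at this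
  have hdisjN : interior (convexHull ℝ ({u, v, p} : Set Pt))
      ∩ interior (convexHull ℝ ({u, v, q} : Set Pt)) = ∅ := by
    have := B.interiors_disjoint _ hNp _ hNq hNpq; rwa [hNps, hNqs] at this
  -- quad_main calls
  obtain ⟨hcov1, z1, hz1seg, hz1int⟩ := quad_main u v p q hpq hposP' hposQ' hncT₁ hncT₂ hdisjT
  obtain ⟨hcov2, z2, hz2seg, hz2int⟩ := quad_main p q u v huv hposU hposV hncNp hncNq hdisjN
  have hQs2 : (↑(T₁ ∪ T₂) : Set Pt) = ({p, q, u, v} : Set Pt) := by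
    rw [hQs]; ext w; simp <;> tauto
  refine ⟨T₁, T₂, p, q, u, v, hT₁, hT₂, hTne, hs1, hs2, hex, htri, hc2, hc4, hpos, hnew,
    hfo, hfn, hT₁e, hT₂e, hpq, huv, huold, hvold, hpnew, hqnew, hQ, hNp, hNq, ?_, ?_, ?_⟩
  · rw [hQs, hT₁s, hT₂s]; exact hcov1
  · rw [hQs2, hNps, hNqs]; exact hcov2
  · refine ⟨z1, ?_, ?_⟩
    · have : (↑f.new : Set Pt) = ({u, v} : Set Pt) := by rw [hfn]; simp
      rw [this, convexHull_pair]
      exact hz1seg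
    · rw [hQs]; exact hz1int

open Set Finset in
lemma swap_flip {P : Finset Pt} {A B C : Triangulation P} {f g : Flip}
    (hAB : FlipStep A f B) (hBC : FlipStep B g C) (hne : f.new ≠ g.old)
    (hsh : ¬ B.ShareTriangle f.new g.old) :
    ∃ B' : Triangulation P, FlipStep A g B' ∧ FlipStep B' f C := by
  obtain ⟨T₁, T₂, p, q, u, v, hT₁, hT₂, hTne, hfs1, hfs2, hexf, htriB, hfc2, hfc4, hfpos, hfnew,
    hfo, hfn, hT₁e, hT₂e, hpq, huv, huold, hvold, hpnew, hqnew, hQf, hNp, hNq, hcovTf, hcovNf,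
    zf, hzf1, hzf2⟩ := step_geometry hAB
  obtain ⟨U₁, U₂, p', q', u', v', hU₁, hU₂, hUne, hgs1, hgs2, hexg, htriC, hgc2, hgc4, hgpos,
    hgnew, hgo, hgn, hU₁e, hU₂e, hpq', huv', huold', hvold', hpnew', hqnew', hQg, hNp', hNq',
    hcovTg, hcovNg, zg, hzg1, hzg2⟩ := step_geometry hBC
  have hfnc2 : f.new.card = 2 := by
    rw [hfn, Finset.card_insert_of_notMem (by simp [huv]), Finset.card_singleton]
  have hgnc2 : g.new.card = 2 := by
    rw [hgn, Finset.card_insert_of_notMem (by simp [huv']), Finset.card_singleton]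
  have F2 : ∀ T ∈ B.triangles, f.new ⊆ T → g.old ⊆ T → False := by
    intro T hT h1 h2
    exact hsh ⟨hne, hfnc2, hgc2, T, hT, h1, h2⟩
  have F1 : ∀ T ∈ B.triangles, ¬ f.old ⊆ T := by
    intro T hT hsub
    rw [htriB] at hT
    rcases Finset.mem_union.mp hT with h | h
    · obtain ⟨hTA, hTn⟩ := Finset.mem_sdiff.mp h
      rcases hexf T hTA hsub with rfl | rfl <;> simp at hTn
    · obtain ⟨x, hx, rfl⟩ := Finset.mem_image.mp h
      have hp : p ∈ insert x f.new := hsub (by rw [hfo]; simp)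
      have hq : q ∈ insert x f.new := hsub (by rw [hfo]; simp)
      rcases Finset.mem_insert.mp hp with h1 | h1
      · rcases Finset.mem_insert.mp hq with h2 | h2
        · exact hpq (h1.trans h2.symm)
        · exact hqnew h2
      · exact hpnew h1
  have hufnew : u ∈ f.new := by rw [hfn]; simp
  have hvfnew : v ∈ f.new := by rw [hfn]; simp
  -- g.old is not contained in T₁ nor T₂
  have F3gen : ∀ (S : Finset Pt) (w₀ : Pt), S = {p, q, w₀} → w₀ ∉ f.old → w₀ ∈ f.new →
      ¬ g.old ⊆ S := by
    intro S w₀ hSe hw₀old hw₀new hsub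
    by_cases hcase : g.old = f.old
    · exact F1 U₁ hU₁ (hcase ▸ hgs1)
    · have hw0_in : w₀ ∈ g.old := by
        by_contra hw0_not
        apply hcase
        apply Finset.eq_of_subset_of_card_le ?_ (by rw [hfc2, hgc2])
        intro w hw
        have hwS := hsub hw
        rw [hSe] at hwS
        rw [hfo]
        rcases Finset.mem_insert.mp hwS with h | h
        · simp [h]
        · rcases Finset.mem_insert.mp h with h | h
          · simp [h]
          · rw [Finset.mem_singleton] at h
            exact absurd (h ▸ hw) hw0_not
      obtain ⟨w, hwgo, hwne⟩ : ∃ w, w ∈ g.old ∧ w ≠ w₀ := by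
        obtain ⟨a', b', hab, hgo'⟩ := Finset.card_eq_two.mp hgc2
        by_cases h : a' = w₀
        · exact ⟨b', by rw [hgo']; simp, by rw [← h]; exact fun hh => hab hh.symm⟩
        · exact ⟨a', by rw [hgo']; simp, h⟩
      have hwfold : w ∈ f.old := by
        have hwS := hsub hwgo
        rw [hSe] at hwS
        rw [hfo]
        rcases Finset.mem_insert.mp hwS with h | h
        · simp [h]
        · rcases Finset.mem_insert.mp h with h | h
          · simp [h]
          · rw [Finset.mem_singleton] at h
            exact absurd h hwne
      have hgow : g.old = {w₀, w} := by
        apply (Finset.eq_of_subset_of_card_le ?_ ?_).symm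
        · intro y hy
          rcases Finset.mem_insert.mp hy with h | h
          · exact h ▸ hw0_in
          · rw [Finset.mem_singleton] at h; exact h ▸ hwgo
        · rw [hgc2, Finset.card_insert_of_notMem (by simp [Ne.symm hwne]),
            Finset.card_singleton]
      have hsubN : g.old ⊆ insert w f.new := by
        rw [hgow]
        intro y hy
        rcases Finset.mem_insert.mp hy with h | h
        · exact h ▸ Finset.mem_insert_of_mem hw₀new
        · rw [Finset.mem_singleton] at h; exact h ▸ Finset.mem_insert_self w f.new
      have hNw : insert w f.new ∈ B.triangles := by
        rw [hfo] at hwfold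
        rcases Finset.mem_insert.mp hwfold with h | h
        · exact h ▸ hNp
        · rw [Finset.mem_singleton] at h; exact h ▸ hNq
      exact F2 _ hNw (Finset.subset_insert _ _) hsubN
  have F3 : ¬ g.old ⊆ T₁ := F3gen T₁ u hT₁e huold hufnew
  have F3' : ¬ g.old ⊆ T₂ := F3gen T₂ v hT₂e hvold hvfnew
  have hU₁nT₁ : U₁ ≠ T₁ := fun h => F3 (h ▸ hgs1)
  have hU₁nT₂ : U₁ ≠ T₂ := fun h => F3' (h ▸ hgs1)
  have hU₂nT₁ : U₂ ≠ T₁ := fun h => F3 (h ▸ hgs2)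
  have hU₂nT₂ : U₂ ≠ T₂ := fun h => F3' (h ▸ hgs2)
  have hUA : ∀ (U : Finset Pt), U ∈ B.triangles → g.old ⊆ U → U ∈ A.triangles := by
    intro U hUB hsub
    rw [htriB] at hUB
    rcases Finset.mem_union.mp hUB with h | h
    · exact (Finset.mem_sdiff.mp h).1
    · obtain ⟨x, hx, rfl⟩ := Finset.mem_image.mp h
      exact absurd hsub (fun hs => F2 _ (htriB ▸ Finset.mem_union_right _ h)
        (Finset.subset_insert _ _) hs)
  have hU₁A : U₁ ∈ A.triangles := hUA U₁ hU₁ hgs1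
  have hU₂A : U₂ ∈ A.triangles := hUA U₂ hU₂ hgs2
  have hu'U₁ : u' ∈ U₁ := by rw [hU₁e]; simp
  have hv'U₂ : v' ∈ U₂ := by rw [hU₂e]; simp
  have hsubQ : ∀ x ∈ g.old, insert x g.new ⊆ U₁ ∪ U₂ := by
    intro x hx y hy
    rcases Finset.mem_insert.mp hy with h | h
    · exact h ▸ Finset.mem_union_left _ (hgs1 hx)
    · rw [hgn] at h
      rcases Finset.mem_insert.mp h with h | h
      · exact h ▸ Finset.mem_union_left _ hu'U₁
      · rw [Finset.mem_singleton] at h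
        exact h ▸ Finset.mem_union_right _ hv'U₂
  -- f.old is not contained in any new triangle of g
  have F6 : ∀ x ∈ g.old, ¬ f.old ⊆ insert x g.new := by
    intro x hxgo hsub
    by_cases hcase : f.old = g.new
    · have h1 : zg ∈ convexHull ℝ (↑f.old : Set Pt) := by rw [hcase]; exact hzg1
      have h2 : zg ∈ convexHull ℝ (↑T₁ : Set Pt) :=
        convexHull_mono (Finset.coe_subset.mpr hfs1) h1
      obtain ⟨x₁, hx₁U, hx₁T⟩ := probe A hT₁ h2 isOpen_interior hzg2
      have hx₁Q : x₁ ∈ convexHull ℝ (↑(U₁ ∪ U₂) : Set Pt) := interior_subset hx₁U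
      rw [hcovTg] at hx₁Q
      rcases hx₁Q with h | h
      · obtain ⟨w, hwS, hwU₁⟩ := probe A hU₁A h isOpen_interior hx₁T
        have hd := A.interiors_disjoint T₁ hT₁ U₁ hU₁A (Ne.symm hU₁nT₁)
        have : w ∈ (∅ : Set Pt) := hd ▸ (Set.mem_inter hwS hwU₁)
        exact this
      · obtain ⟨w, hwS, hwU₂⟩ := probe A hU₂A h isOpen_interior hx₁T
        have hd := A.interiors_disjoint T₁ hT₁ U₂ hU₂A (Ne.symm hU₂nT₁)
        have : w ∈ (∅ : Set Pt) := hd ▸ (Set.mem_inter hwS hwU₂)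
        exact this
    · have hp : p ∈ insert x g.new := hsub (by rw [hfo]; simp)
      have hq : q ∈ insert x g.new := hsub (by rw [hfo]; simp)
      have hxor : p = x ∨ q = x := by
        by_contra hcon
        push_neg at hcon
        apply hcase
        apply Finset.eq_of_subset_of_card_le ?_ (by rw [hfc2, hgnc2])
        intro w hw
        rw [hfo] at hw
        rcases Finset.mem_insert.mp hw with h | h
        · subst h
          rcases Finset.mem_insert.mp hp with h | h
          · exact absurd h hcon.1
          · exact h
        · rw [Finset.mem_singleton] at h
          subst h
          rcases Finset.mem_insert.mp hq with h | h
          · exact absurd h hcon.2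
          · exact h
      -- the other endpoint of f.old lies in g.new
      obtain ⟨y, hyfold, hygnew⟩ : ∃ y, y ∈ f.old ∧ y ∈ g.new := by
        rcases hxor with h | h
        · refine ⟨q, by rw [hfo]; simp, ?_⟩
          rcases Finset.mem_insert.mp hq with h2 | h2
          · exact absurd (h2.trans h.symm) (Ne.symm hpq)
          · exact h2
        · refine ⟨p, by rw [hfo]; simp, ?_⟩
          rcases Finset.mem_insert.mp hp with h2 | h2
          · exact absurd (h2.trans h.symm) hpq
          · exact h2
      have hfoldeq : f.old = {x, y} := by
        have hxfold : x ∈ f.old := by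
          rcases hxor with h | h
          · exact h ▸ (by rw [hfo]; simp : p ∈ f.old)
          · exact h ▸ (by rw [hfo]; simp : q ∈ f.old)
        have hxyne : x ≠ y := by
          intro h
          subst h
          rw [hgn] at hygnew
          rcases Finset.mem_insert.mp hygnew with h | h
          · exact huold' (h ▸ hxgo)
          · rw [Finset.mem_singleton] at h
            exact hvold' (h ▸ hxgo)
        apply (Finset.eq_of_subset_of_card_le ?_ ?_).symm
        · intro w hw
          rcases Finset.mem_insert.mp hw with h | h
          · exact h ▸ hxfold
          · rw [Finset.mem_singleton] at h; exact h ▸ hyfold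
        · rw [hfc2, Finset.card_insert_of_notMem (by simp [hxyne]), Finset.card_singleton]
      rw [hgn] at hygnew
      rcases Finset.mem_insert.mp hygnew with h | h
      · -- y = u', f.old ⊆ U₁
        apply F1 U₁ hU₁
        rw [hfoldeq]
        intro w hw
        rcases Finset.mem_insert.mp hw with h2 | h2
        · exact h2 ▸ hgs1 hxgo
        · rw [Finset.mem_singleton] at h2
          exact (h2.trans h) ▸ hu'U₁
      · rw [Finset.mem_singleton] at h
        apply F1 U₂ hU₂
        rw [hfoldeq]
        intro w hw
        rcases Finset.mem_insert.mp hw with h2 | h2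
        · exact h2 ▸ hgs2 hxgo
        · rw [Finset.mem_singleton] at h2
          exact (h2.trans h) ▸ hv'U₂
  have F7 : ∀ x ∈ g.old, insert x g.new ≠ T₁ ∧ insert x g.new ≠ T₂ := by
    intro x hx
    exact ⟨fun h => F6 x hx (h.symm ▸ hfs1), fun h => F6 x hx (h.symm ▸ hfs2)⟩
  have F8 : ∀ x ∈ f.old, insert x f.new ≠ U₁ ∧ insert x f.new ≠ U₂ := by
    intro x hx
    constructor
    · intro h
      exact F2 U₁ hU₁ (h ▸ Finset.subset_insert _ _) hgs1
    · intro h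
      exact F2 U₂ hU₂ (h ▸ Finset.subset_insert _ _) hgs2
  have hnewGC : ∀ x ∈ g.old, insert x g.new ∈ C.triangles := by
    intro x hx
    rw [htriC]
    exact Finset.mem_union_right _ (Finset.mem_image.mpr ⟨x, hx, rfl⟩)
  -- the key geometric disjointness: old f-triangles vs new g-triangles
  have hTinew : ∀ (S : Finset Pt), (S = T₁ ∨ S = T₂) → ∀ x ∈ g.old,
      interior (convexHull ℝ (↑S : Set Pt))
        ∩ interior (convexHull ℝ (↑(insert x g.new) : Set Pt)) = ∅ := by
    intro S hScases x hx
    rw [Set.eq_empty_iff_forall_notMem]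
    rintro y ⟨hy1, hy2⟩
    have hSA : S ∈ A.triangles := by rcases hScases with rfl | rfl; exacts [hT₁, hT₂]
    have hSneU₁ : S ≠ U₁ := by
      rcases hScases with rfl | rfl; exacts [Ne.symm hU₁nT₁, Ne.symm hU₁nT₂]
    have hSneU₂ : S ≠ U₂ := by
      rcases hScases with rfl | rfl; exacts [Ne.symm hU₂nT₁, Ne.symm hU₂nT₂]
    have hyQ : y ∈ convexHull ℝ (↑(U₁ ∪ U₂) : Set Pt) :=
      convexHull_mono (Finset.coe_subset.mpr (hsubQ x hx)) (interior_subset hy2)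
    rw [hcovTg] at hyQ
    rcases hyQ with h | h
    · obtain ⟨w, hwS, hwU₁⟩ := probe A hU₁A h isOpen_interior hy1
      have hd := A.interiors_disjoint S hSA U₁ hU₁A hSneU₁
      have : w ∈ (∅ : Set Pt) := hd ▸ (Set.mem_inter hwS hwU₁)
      exact this
    · obtain ⟨w, hwS, hwU₂⟩ := probe A hU₂A h isOpen_interior hy1
      have hd := A.interiors_disjoint S hSA U₂ hU₂A hSneU₂
      have : w ∈ (∅ : Set Pt) := hd ▸ (Set.mem_inter hwS hwU₂)
      exact this
  -- construct B'
  refine ⟨⟨(A.triangles \ {U₁, U₂}) ∪ g.old.image (fun x => insert x g.new),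
    ?_, ?_, ?_, ?_, ?_, ?_⟩, ?_, ?_⟩
  · -- card_eq
    intro T hT
    rcases Finset.mem_union.mp hT with h | h
    · exact A.card_eq T (Finset.mem_sdiff.mp h).1
    · obtain ⟨x, hx, rfl⟩ := Finset.mem_image.mp h
      exact C.card_eq _ (hnewGC x hx)
  · -- not_collinear
    intro T hT
    rcases Finset.mem_union.mp hT with h | h
    · exact A.not_collinear T (Finset.mem_sdiff.mp h).1
    · obtain ⟨x, hx, rfl⟩ := Finset.mem_image.mp h
      exact C.not_collinear _ (hnewGC x hx)
  · -- vertices_subset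
    intro T hT
    rcases Finset.mem_union.mp hT with h | h
    · exact A.vertices_subset T (Finset.mem_sdiff.mp h).1
    · obtain ⟨x, hx, rfl⟩ := Finset.mem_image.mp h
      exact C.vertices_subset _ (hnewGC x hx)
  · -- covers
    have hAB'un : (⋃ T ∈ ((A.triangles \ {U₁, U₂}) ∪ g.old.image (fun x => insert x g.new)),
        convexHull ℝ (↑T : Set Pt)) = ⋃ T ∈ A.triangles, convexHull ℝ (↑T : Set Pt) := by
      apply Set.Subset.antisymm
      · intro x hx
        simp only [Set.mem_iUnion, exists_prop] at hx ⊢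
        obtain ⟨T, hT, hxT⟩ := hx
        rcases Finset.mem_union.mp hT with h | h
        · exact ⟨T, (Finset.mem_sdiff.mp h).1, hxT⟩
        · obtain ⟨y, hy, rfl⟩ := Finset.mem_image.mp h
          have h1 : x ∈ convexHull ℝ (↑(U₁ ∪ U₂) : Set Pt) :=
            convexHull_mono (Finset.coe_subset.mpr (hsubQ y hy)) hxT
          rw [hcovTg] at h1
          rcases h1 with h1 | h1
          exacts [⟨U₁, hU₁A, h1⟩, ⟨U₂, hU₂A, h1⟩]
      · intro x hx
        simp only [Set.mem_iUnion, exists_prop] at hx ⊢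
        obtain ⟨T, hT, hxT⟩ := hx
        by_cases h1 : T = U₁ ∨ T = U₂
        · have hxQ : x ∈ convexHull ℝ (↑(U₁ ∪ U₂) : Set Pt) := by
            rcases h1 with rfl | rfl
            · exact convexHull_mono (Finset.coe_subset.mpr Finset.subset_union_left) hxT
            · exact convexHull_mono (Finset.coe_subset.mpr Finset.subset_union_right) hxT
          rw [hcovNg] at hxQ
          rcases hxQ with h2 | h2
          · exact ⟨insert p' g.new, Finset.mem_union_right _
              (Finset.mem_image.mpr ⟨p', by rw [hgo]; simp, rfl⟩), h2⟩
          · exact ⟨insert q' g.new, Finset.mem_union_right _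
              (Finset.mem_image.mpr ⟨q', by rw [hgo]; simp, rfl⟩), h2⟩
        · push_neg at h1
          exact ⟨T, Finset.mem_union_left _
            (Finset.mem_sdiff.mpr ⟨hT, by simp [h1.1, h1.2]⟩), hxT⟩
    exact hAB'un.trans A.covers
  · -- interiors_disjoint
    intro S hS T hT hST
    rcases Finset.mem_union.mp hS with hSa | hSi <;> rcases Finset.mem_union.mp hT with hTa | hTi
    · exact A.interiors_disjoint S (Finset.mem_sdiff.mp hSa).1 T (Finset.mem_sdiff.mp hTa).1 hST
    · obtain ⟨x, hx, rfl⟩ := Finset.mem_image.mp hTi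
      by_cases hcase : S = T₁ ∨ S = T₂
      · exact hTinew S hcase x hx
      · push_neg at hcase
        have hSB : S ∈ B.triangles := by
          rw [htriB]
          exact Finset.mem_union_left _
            (Finset.mem_sdiff.mpr ⟨(Finset.mem_sdiff.mp hSa).1, by simp [hcase.1, hcase.2]⟩)
        have hSC : S ∈ C.triangles := by
          rw [htriC]
          refine Finset.mem_union_left _ (Finset.mem_sdiff.mpr ⟨hSB, ?_⟩)
          have h2 := (Finset.mem_sdiff.mp hSa).2
          simpa using h2
        exact C.interiors_disjoint S hSC _ (hnewGC x hx) hST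
    · obtain ⟨x, hx, rfl⟩ := Finset.mem_image.mp hSi
      rw [Set.inter_comm]
      by_cases hcase : T = T₁ ∨ T = T₂
      · exact hTinew T hcase x hx
      · push_neg at hcase
        have hTB : T ∈ B.triangles := by
          rw [htriB]
          exact Finset.mem_union_left _
            (Finset.mem_sdiff.mpr ⟨(Finset.mem_sdiff.mp hTa).1, by simp [hcase.1, hcase.2]⟩)
        have hTC : T ∈ C.triangles := by
          rw [htriC]
          refine Finset.mem_union_left _ (Finset.mem_sdiff.mpr ⟨hTB, ?_⟩)
          have h2 := (Finset.mem_sdiff.mp hTa).2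
          simpa using h2
        exact C.interiors_disjoint T hTC _ (hnewGC x hx) (Ne.symm hST)
    · obtain ⟨x, hx, rfl⟩ := Finset.mem_image.mp hSi
      obtain ⟨y, hy, rfl⟩ := Finset.mem_image.mp hTi
      exact C.interiors_disjoint _ (hnewGC x hx) _ (hnewGC y hy) hST
  · -- mem_vertex
    intro w hw
    obtain ⟨T, hT, hwT⟩ := A.mem_vertex w hw
    by_cases hc : T = U₁ ∨ T = U₂
    · have hwQ : w ∈ U₁ ∪ U₂ := by
        rcases hc with rfl | rfl
        · exact Finset.mem_union_left _ hwT
        · exact Finset.mem_union_right _ hwT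
      rw [hQg] at hwQ
      simp only [Finset.mem_insert, Finset.mem_singleton] at hwQ
      have hin : w ∈ insert p' g.new ∨ w ∈ insert q' g.new := by
        rcases hwQ with h | h | h | h
        · subst h; exact Or.inl (Finset.mem_insert_self _ _)
        · subst h; exact Or.inr (Finset.mem_insert_self _ _)
        · subst h; exact Or.inl (Finset.mem_insert_of_mem (by rw [hgn]; simp))
        · subst h; exact Or.inl (Finset.mem_insert_of_mem (by rw [hgn]; simp))
      rcases hin with h | h
      · exact ⟨insert p' g.new, Finset.mem_union_right _
          (Finset.mem_image.mpr ⟨p', by rw [hgo]; simp, rfl⟩), h⟩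
      · exact ⟨insert q' g.new, Finset.mem_union_right _
          (Finset.mem_image.mpr ⟨q', by rw [hgo]; simp, rfl⟩), h⟩
    · push_neg at hc
      exact ⟨T, Finset.mem_union_left _ (Finset.mem_sdiff.mpr ⟨hT, by simp [hc.1, hc.2]⟩), hwT⟩
  · -- FlipStep A g B'
    refine ⟨U₁, hU₁A, U₂, hU₂A, hUne, hgc2, hgs1, hgs2, ?_, hgc4, hgpos, hgnew, rfl⟩
    intro T hT hsub
    by_cases h1 : T = T₁
    · exact absurd (h1 ▸ hsub) F3
    by_cases h2 : T = T₂
    · exact absurd (h2 ▸ hsub) F3'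
    have hTB : T ∈ B.triangles := by
      rw [htriB]
      exact Finset.mem_union_left _ (Finset.mem_sdiff.mpr ⟨hT, by simp [h1, h2]⟩)
    exact hexg T hTB hsub
  · -- FlipStep B' f C
    refine ⟨T₁, ?_, T₂, ?_, hTne, hfc2, hfs1, hfs2, ?_, hfc4, hfpos, hfnew, ?_⟩
    · exact Finset.mem_union_left _ (Finset.mem_sdiff.mpr ⟨hT₁,
        by simp [Ne.symm hU₁nT₁, Ne.symm hU₂nT₁]⟩)
    · exact Finset.mem_union_left _ (Finset.mem_sdiff.mpr ⟨hT₂,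
        by simp [Ne.symm hU₁nT₂, Ne.symm hU₂nT₂]⟩)
    · intro T hT hsub
      rcases Finset.mem_union.mp hT with h | h
      · exact hexf T (Finset.mem_sdiff.mp h).1 hsub
      · obtain ⟨x, hx, rfl⟩ := Finset.mem_image.mp h
        exact absurd hsub (F6 x hx)
    · show C.triangles = (A.triangles \ {U₁, U₂} ∪ g.old.image (fun x => insert x g.new))
        \ {T₁, T₂} ∪ f.old.image (fun p => insert p f.new)
      rw [htriC, htriB]
      ext T
      simp only [Finset.mem_union, Finset.mem_sdiff, Finset.mem_insert, Finset.mem_singleton,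
        Finset.mem_image, not_or]
      have h7 : (∃ x, x ∈ g.old ∧ insert x g.new = T) → T ≠ T₁ ∧ T ≠ T₂ := by
        rintro ⟨x, hx, rfl⟩; exact F7 x hx
      have h8 : (∃ x, x ∈ f.old ∧ insert x f.new = T) → T ≠ U₁ ∧ T ≠ U₂ := by
        rintro ⟨x, hx, rfl⟩; exact F8 x hx
      constructor
      · rintro (⟨h1 | h1, h2⟩ | h1)
        · exact Or.inl ⟨Or.inl ⟨h1.1, h2⟩, h1.2⟩
        · exact Or.inr h1
        · exact Or.inl ⟨Or.inr h1, h7 h1⟩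
      · rintro (⟨h1 | h1, h2⟩ | h1)
        · exact Or.inl ⟨Or.inl ⟨h1.1, h2⟩, h1.2⟩
        · exact Or.inr h1
        · exact Or.inl ⟨Or.inr h1, h8 h1⟩

lemma sink_facts {P : Finset Pt} {r : ℕ} (S : FlipSeq P r) (s : Fin r)
    (hsink : ∀ j : Fin r, ¬ S.Arc s j) :
    ∀ j : Fin r, s < j → (S.flips s).new ≠ (S.flips j).old ∧
      ¬ (S.tri j.castSucc).ShareTriangle (S.flips s).new (S.flips j).old := by
  have main : ∀ n : ℕ, ∀ hn : n < r, s < (⟨n, hn⟩ : Fin r) →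
      (S.flips s).new ≠ (S.flips ⟨n, hn⟩).old ∧
      ¬ (S.tri (⟨n, hn⟩ : Fin r).castSucc).ShareTriangle (S.flips s).new
        (S.flips ⟨n, hn⟩).old := by
    intro n
    induction n using Nat.strong_induction_on with
    | _ n ih =>
      intro hn hs
      have hcond2 : ∀ p : Fin r, s < p → p < (⟨n, hn⟩ : Fin r) →
          (S.flips p).old ≠ (S.flips s).new := by
        intro p hp1 hp2
        have hplt : (p : ℕ) < n := hp2
        have := (ih p.val hplt p.isLt (by simpa using hp1)).1
        simpa using fun h => this h.symm
      have harc := hsink ⟨n, hn⟩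
      constructor
      · intro h
        exact harc ⟨hs, Or.inl h, hcond2⟩
      · intro h
        exact harc ⟨hs, Or.inr h, hcond2⟩
  intro j hj
  have := main j.val j.isLt (by simpa using hj)
  simpa using this

theorem statement1' {P : Finset Pt} {r : ℕ} (S : FlipSeq P r) (s : Fin r)
    (hsink : ∀ j : Fin r, ¬ S.Arc s j) :
    ∃ S' : FlipSeq P r,
      S'.tri 0 = S.tri 0 ∧
      S'.tri (Fin.last r) = S.tri (Fin.last r) ∧
      ∀ p : Fin r, S'.flips p = S.flips (moveToEnd s p) := by
  classical
  have hfacts := sink_facts S s hsink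
  set sv := (s : ℕ) with hsv
  have hsvr : sv < r := s.isLt
  -- the invariant
  let Inv : ℕ → Triangulation P → Prop := fun t V =>
    ∀ h : sv + t < r, FlipStep V (S.flips s) (S.tri ⟨sv + t + 1, by omega⟩)
  have hInv0 : Inv 0 (S.tri s.castSucc) := by
    intro h
    have h1 := S.step s
    have e1 : s.succ = (⟨sv + 0 + 1, by omega⟩ : Fin (r + 1)) := by
      apply Fin.ext; simp [hsv]
    rw [e1] at h1
    exact h1
  have hstep' : ∀ t (V : Triangulation P), ∃ V', ∀ h : sv + t + 1 < r, Inv t V →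
      Inv (t+1) V' ∧ FlipStep V (S.flips ⟨sv + t + 1, h⟩) V' := by
    intro t V
    by_cases h : sv + t + 1 < r
    · by_cases hi : Inv t V
      · have hA : FlipStep V (S.flips s) (S.tri ⟨sv + t + 1, by omega⟩) := hi (by omega)
        have hB : FlipStep (S.tri ⟨sv + t + 1, by omega⟩) (S.flips ⟨sv + t + 1, h⟩)
            (S.tri ⟨sv + t + 2, by omega⟩) := by
          have h1 := S.step ⟨sv + t + 1, h⟩
          have e1 : (⟨sv + t + 1, h⟩ : Fin r).castSucc
              = (⟨sv + t + 1, by omega⟩ : Fin (r + 1)) := by apply Fin.ext; simp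
          have e2 : (⟨sv + t + 1, h⟩ : Fin r).succ
              = (⟨sv + t + 2, by omega⟩ : Fin (r + 1)) := by apply Fin.ext; simp
          rw [e1, e2] at h1
          exact h1
        have hj := hfacts ⟨sv + t + 1, h⟩ (by rw [Fin.lt_def]; simp [← hsv])
        have e1 : (⟨sv + t + 1, h⟩ : Fin r).castSucc
            = (⟨sv + t + 1, by omega⟩ : Fin (r + 1)) := by apply Fin.ext; simp
        rw [e1] at hj
        obtain ⟨B', h1, h2⟩ := swap_flip hA hB hj.1 hj.2
        refine ⟨B', fun h' _ => ⟨fun h'' => ?_, h1⟩⟩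
        have e3 : (⟨sv + (t+1) + 1, by omega⟩ : Fin (r + 1))
            = (⟨sv + t + 2, by omega⟩ : Fin (r + 1)) := by apply Fin.ext; simp; omega
        rw [e3]
        exact h2
      · exact ⟨V, fun h' hi' => absurd hi' hi⟩
    · exact ⟨V, fun h' => absurd h' h⟩
  choose F hF using hstep'
  let Vseq : ℕ → Triangulation P := fun t => Nat.rec (S.tri s.castSucc) (fun t' ih => F t' ih) t
  have hVsucc : ∀ t, Vseq (t+1) = F t (Vseq t) := fun t => rfl
  have hVInv : ∀ t, Inv t (Vseq t) := by
    intro t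
    induction t with
    | zero => exact hInv0
    | succ t ih =>
      by_cases h : sv + t + 1 < r
      · exact (hF t (Vseq t) h ih).1
      · intro h'
        exact absurd (by omega : sv + t + 1 < r) h
  have hVstep : ∀ t (h : sv + t + 1 < r),
      FlipStep (Vseq t) (S.flips ⟨sv + t + 1, h⟩) (Vseq (t+1)) :=
    fun t h => (hF t (Vseq t) h (hVInv t)).2
  -- assemble the new flip sequence
  refine ⟨⟨fun i => if h : (i : ℕ) ≤ sv then S.tri i
      else if h2 : (i : ℕ) < r then Vseq ((i : ℕ) - sv) else S.tri i,
    fun p => S.flips (moveToEnd s p), ?_⟩, ?_, ?_, fun p => rfl⟩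
  · intro i
    by_cases h1 : (i : ℕ) < sv
    · -- old step
      rw [dif_pos (show ((i.castSucc : Fin (r+1)) : ℕ) ≤ sv by simp; omega)]
      rw [dif_pos (show ((i.succ : Fin (r+1)) : ℕ) ≤ sv by simp [Fin.val_succ]; omega)]
      have e1 : moveToEnd s i = i := by rw [moveToEnd, if_pos h1]
      rw [e1]
      exact S.step i
    · push_neg at h1
      by_cases h2 : (i : ℕ) + 1 < r
      · -- middle step
        have eflip : moveToEnd s i = ⟨(i : ℕ) + 1, h2⟩ := by
          rw [moveToEnd, if_neg (by omega), dif_pos h2]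
        rw [eflip]
        have eA : (if h : ((i.castSucc : Fin (r+1)) : ℕ) ≤ sv then S.tri i.castSucc
            else if h2 : ((i.castSucc : Fin (r+1)) : ℕ) < r then Vseq (((i.castSucc : Fin (r+1)) : ℕ) - sv) else S.tri i.castSucc)
            = Vseq ((i : ℕ) - sv) := by
          simp only [Fin.coe_castSucc]
          by_cases h3 : (i : ℕ) ≤ sv
          · rw [dif_pos h3]
            have hieq : (i : ℕ) = sv := le_antisymm h3 h1
            have : i.castSucc = s.castSucc := by apply Fin.ext; simp [hieq, hsv]
            rw [this, hieq, Nat.sub_self]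
            rfl
          · rw [dif_neg h3, dif_pos (by omega : (i : ℕ) < r)]
        have eB : (if h : ((i.succ : Fin (r+1)) : ℕ) ≤ sv then S.tri i.succ
            else if h2 : ((i.succ : Fin (r+1)) : ℕ) < r then Vseq (((i.succ : Fin (r+1)) : ℕ) - sv) else S.tri i.succ)
            = Vseq ((i : ℕ) + 1 - sv) := by
          simp only [Fin.val_succ]
          rw [dif_neg (by omega), dif_pos h2]
        rw [eA, eB]
        have hstep := hVstep ((i : ℕ) - sv) (by omega)
        have e2 : (⟨sv + ((i : ℕ) - sv) + 1, by omega⟩ : Fin r) = ⟨(i : ℕ) + 1, h2⟩ := by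
          apply Fin.ext; simp; omega
        rw [e2] at hstep
        have e3 : (i : ℕ) - sv + 1 = (i : ℕ) + 1 - sv := by omega
        rw [e3] at hstep
        exact hstep
      · -- final step : perform the saved flip s
        have hieq : (i : ℕ) + 1 = r := by have := i.isLt; omega
        have eflip : moveToEnd s i = s := by
          rw [moveToEnd, if_neg (by omega), dif_neg (by omega)]
        rw [eflip]
        have eB : (if h : ((i.succ : Fin (r+1)) : ℕ) ≤ sv then S.tri i.succ
            else if h2 : ((i.succ : Fin (r+1)) : ℕ) < r then Vseq (((i.succ : Fin (r+1)) : ℕ) - sv) else S.tri i.succ)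
            = S.tri i.succ := by
          simp only [Fin.val_succ]
          rw [dif_neg (by omega), dif_neg (by omega)]
        rw [eB]
        by_cases h3 : (i : ℕ) ≤ sv
        · -- i = s, i.e. s is the last flip
          have hieqs : (i : ℕ) = sv := le_antisymm h3 h1
          rw [dif_pos (show ((i.castSucc : Fin (r+1)) : ℕ) ≤ sv by simp [hieqs])]
          have e4 : i.castSucc = s.castSucc := by apply Fin.ext; simp [hieqs, hsv]
          have e5 : i = s := by apply Fin.ext; simp [hieqs, hsv]
          rw [e4, e5]
          exact S.step s
        · rw [dif_neg (by simpa using h3), dif_pos (by simpa using i.isLt)]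
          simp only [Fin.coe_castSucc]
          have hstep := hVInv ((i : ℕ) - sv) (by omega)
          have e6 : (⟨sv + ((i : ℕ) - sv) + 1, by omega⟩ : Fin (r+1)) = i.succ := by
            apply Fin.ext; simp; omega
          rw [e6] at hstep
          exact hstep
  · simp
  · show (if h : ((Fin.last r : Fin (r+1)) : ℕ) ≤ sv then S.tri (Fin.last r)
      else if h2 : ((Fin.last r : Fin (r+1)) : ℕ) < r then Vseq (((Fin.last r : Fin (r+1)) : ℕ) - sv)
      else S.tri (Fin.last r)) = S.tri (Fin.last r)
    have e : ((Fin.last r : Fin (r+1)) : ℕ) = r := rfl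
    rw [dif_neg (by rw [e]; omega), dif_neg (by rw [e]; omega)]

/-- Let `T₀` be a triangulation of a finite point set `P` in the plane
and `F = ⟨f₁,…,f_r⟩` a valid sequence of flips transforming `T₀` into `T_r`. If `f_s` is
a sink of `D_F` (no arc of `D_F` leaves `f_s`), then the sequence `F'` obtained from `F`
by deleting `f_s` and appending it at the end is a valid sequence of flips with respect
to `T₀` that transforms `T₀` into `T_r`. -/
theorem statement1 {P : Finset Pt} {r : ℕ} (S : FlipSeq P r) (s : Fin r)
    (hsink : ∀ j : Fin r, ¬ S.Arc s j) :
    ∃ S' : FlipSeq P r,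
      S'.tri 0 = S.tri 0 ∧
      S'.tri (Fin.last r) = S.tri (Fin.last r) ∧
      ∀ p : Fin r, S'.flips p = S.flips (moveToEnd s p) :=
  statement1' S s hsink

end
end

section
/- Let T_0 be a triangulation of a finite set P of points in the plane and let F = ⟨f_1,…,f_r⟩ be a valid sequence of flips with respect to T_0. Then every node of D_F has indegree at most 5, and consequently the number of arcs of D_F is at most 5 times the number of nodes of D_F. -/
set_option maxHeartbeats 1000000

noncomputable def mkTriBasis (p₀ p₁ p₂ : Pt) (h : ¬ Collinear ℝ ({p₀,p₁,p₂} : Set Pt)) :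
    AffineBasis (Fin 3) ℝ Pt := by
  refine ⟨![p₀,p₁,p₂], affineIndependent_iff_not_collinear_set.2 h, ?_⟩
  rw [(affineIndependent_iff_not_collinear_set.2 h).affineSpan_eq_top_iff_card_eq_finrank_add_one]
  simp

lemma mkTriBasis_coe (p₀ p₁ p₂ : Pt) (h : ¬ Collinear ℝ ({p₀,p₁,p₂} : Set Pt)) :
    ⇑(mkTriBasis p₀ p₁ p₂ h) = ![p₀,p₁,p₂] := rfl

attribute [irreducible] mkTriBasis

lemma interior_tri (p₀ p₁ p₂ : Pt) (h : ¬ Collinear ℝ ({p₀,p₁,p₂} : Set Pt)) :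
    interior (convexHull ℝ ({p₀,p₁,p₂} : Set Pt)) =
      {x | ∀ i, 0 < (mkTriBasis p₀ p₁ p₂ h).coord i x} := by
  have h2 : Set.range ⇑(mkTriBasis p₀ p₁ p₂ h) = ({p₀,p₁,p₂} : Set Pt) := by
    rw [mkTriBasis_coe]
    simp only [Matrix.range_cons, Matrix.range_empty, Set.union_empty, Set.union_singleton]
    ext x; simp; tauto
  rw [← h2, AffineBasis.interior_convexHull]

lemma coord_mkTriBasis (p₀ p₁ p₂ : Pt) (h : ¬ Collinear ℝ ({p₀,p₁,p₂} : Set Pt)) (i j : Fin 3) :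
    (mkTriBasis p₀ p₁ p₂ h).coord i (![p₀,p₁,p₂] j) = if i = j then 1 else 0 := by
  have := (mkTriBasis p₀ p₁ p₂ h).coord_apply i j
  rwa [mkTriBasis_coe] at this

lemma lineMapR (x y t : ℝ) : AffineMap.lineMap x y t = x + t*(y-x) := by
  rw [AffineMap.lineMap_apply_module]; simp [smul_eq_mul]; ring

lemma coord_lineMap (B : AffineBasis (Fin 3) ℝ Pt) (i : Fin 3) (x y : Pt) (t : ℝ) :
    B.coord i (AffineMap.lineMap x y t) = B.coord i x + t * (B.coord i y - B.coord i x) := by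
  rw [(B.coord i).apply_lineMap, lineMapR]

lemma sum_coords (B : AffineBasis (Fin 3) ℝ Pt) (x : Pt) :
    B.coord 0 x + B.coord 1 x + B.coord 2 x = 1 := by
  have := B.sum_coord_apply_eq_one x
  rw [Fin.sum_univ_three] at this; linarith

lemma combo2 (p₀ p₁ p₂ : Pt) (h : ¬ Collinear ℝ ({p₀,p₁,p₂} : Set Pt)) (x : Pt)
    (h2 : (mkTriBasis p₀ p₁ p₂ h).coord 2 x = 0) :
    x = ((mkTriBasis p₀ p₁ p₂ h).coord 0 x) • p₀ + ((mkTriBasis p₀ p₁ p₂ h).coord 1 x) • p₁ := by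
  set B := mkTriBasis p₀ p₁ p₂ h with hB
  have h1 := B.affineCombination_coord_eq_self x
  rw [Finset.affineCombination_eq_linear_combination _ _ _ (B.sum_coord_apply_eq_one x)] at h1
  rw [Fin.sum_univ_three, h2, zero_smul, add_zero] at h1
  have e0 : B 0 = p₀ := by rw [hB, mkTriBasis_coe]; rfl
  have e1 : B 1 = p₁ := by rw [hB, mkTriBasis_coe]; rfl
  rw [e0, e1] at h1
  exact h1.symm

lemma exists_delta (v₁ v₂ v₃ k₁ k₂ k₃ : ℝ) (h₁ : 0 < v₁) (h₂ : 0 < v₂) (h₃ : 0 < v₃) :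
    ∃ δ : ℝ, 0 < δ ∧ δ < 1 ∧ 0 < v₁ + δ * k₁ ∧ 0 < v₂ + δ * k₂ ∧ 0 < v₃ + δ * k₃ := by
  have key : ∀ v k : ℝ, 0 < v → ∀ δ : ℝ, 0 < δ → δ ≤ v / (|k| + 1) → 0 < v + δ * k := by
    intro v k hv δ hδ hδle
    have h1 : 0 < |k| + 1 := by positivity
    have h2 : δ * (|k| + 1) ≤ v := by rwa [← le_div_iff₀ h1]
    have h3 : -(δ * |k|) ≤ δ * k := by nlinarith [neg_abs_le k]
    nlinarith
  have p1 : 0 < v₁ / (|k₁| + 1) := by positivity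
  have p2 : 0 < v₂ / (|k₂| + 1) := by positivity
  have p3 : 0 < v₃ / (|k₃| + 1) := by positivity
  refine ⟨min (1/2) (min (v₁ / (|k₁| + 1)) (min (v₂ / (|k₂| + 1)) (v₃ / (|k₃| + 1)))),
    by positivity, ?_, ?_, ?_, ?_⟩
  · calc _ ≤ (1:ℝ)/2 := min_le_left _ _
      _ < 1 := by norm_num
  · exact key _ _ h₁ _ (by positivity) (le_trans (min_le_right _ _) (min_le_left _ _))
  · exact key _ _ h₂ _ (by positivity)
      (le_trans (min_le_right _ _) (le_trans (min_le_right _ _) (min_le_left _ _)))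
  · exact key _ _ h₃ _ (by positivity)
      (le_trans (min_le_right _ _) (le_trans (min_le_right _ _) (min_le_right _ _)))

lemma geom_core {a b c d q : Pt}
    (hposa : a ∉ convexHull ℝ ({b,c,d} : Set Pt))
    (hposb : b ∉ convexHull ℝ ({a,c,d} : Set Pt))
    (hnc1 : ¬ Collinear ℝ ({a,b,c} : Set Pt))
    (hnc2 : ¬ Collinear ℝ ({a,b,d} : Set Pt))
    (hnc3 : ¬ Collinear ℝ ({c,d,q} : Set Pt))
    (hd12 : interior (convexHull ℝ ({a,b,c} : Set Pt)) ∩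
      interior (convexHull ℝ ({a,b,d} : Set Pt)) = ∅)
    (hd13 : interior (convexHull ℝ ({a,b,c} : Set Pt)) ∩
      interior (convexHull ℝ ({c,d,q} : Set Pt)) = ∅) :
    False := by
  classical
  set B₁ := mkTriBasis a b c hnc1 with hB₁
  set B₂ := mkTriBasis a b d hnc2 with hB₂
  set B₃ := mkTriBasis c d q hnc3 with hB₃
  have c1a : ∀ i, B₁.coord i a = if i = 0 then 1 else 0 := fun i => by
    simpa using coord_mkTriBasis a b c hnc1 i 0
  have c1b : ∀ i, B₁.coord i b = if i = 1 then 1 else 0 := fun i => by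
    simpa using coord_mkTriBasis a b c hnc1 i 1
  have c1c : ∀ i, B₁.coord i c = if i = 2 then 1 else 0 := fun i => by
    simpa using coord_mkTriBasis a b c hnc1 i 2
  have c2a : ∀ i, B₂.coord i a = if i = 0 then 1 else 0 := fun i => by
    simpa using coord_mkTriBasis a b d hnc2 i 0
  have c2b : ∀ i, B₂.coord i b = if i = 1 then 1 else 0 := fun i => by
    simpa using coord_mkTriBasis a b d hnc2 i 1
  have c2d : ∀ i, B₂.coord i d = if i = 2 then 1 else 0 := fun i => by
    simpa using coord_mkTriBasis a b d hnc2 i 2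
  have c3c : ∀ i, B₃.coord i c = if i = 0 then 1 else 0 := fun i => by
    simpa using coord_mkTriBasis c d q hnc3 i 0
  have c3d : ∀ i, B₃.coord i d = if i = 1 then 1 else 0 := fun i => by
    simpa using coord_mkTriBasis c d q hnc3 i 1
  have c3q : ∀ i, B₃.coord i q = if i = 2 then 1 else 0 := fun i => by
    simpa using coord_mkTriBasis c d q hnc3 i 2
  set γ : ℝ := B₁.coord 2 d with hγ
  rcases lt_trichotomy γ 0 with hγneg | hγ0 | hγpos
  · -- c, d strictly on opposite sides of line ab : the diagonals cross
    set s : ℝ := 1 / (1 - γ) with hs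
    have hγ1 : 1 - γ > 1 := by linarith
    have hs0 : 0 < s := by rw [hs]; positivity
    have hs1 : s < 1 := by rw [hs]; rw [div_lt_one (by linarith)]; linarith
    set x : Pt := AffineMap.lineMap c d s with hx
    have hx2 : B₁.coord 2 x = 0 := by
      rw [hx, coord_lineMap, c1c, ← hγ]; simp [hs]; field_simp; ring
    set α : ℝ := B₁.coord 0 x with hα
    set β : ℝ := B₁.coord 1 x with hβ
    have hsum : α + β = 1 := by
      have := sum_coords B₁ x; rw [hx2] at this; linarith
    have hxcombo : x = α • a + β • b := by
      have := combo2 a b c hnc1 x hx2; rwa [← hB₁, ← hα, ← hβ] at this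
    have hxseg : x ∈ segment ℝ c d := by
      rw [segment_eq_image_lineMap]
      exact ⟨s, ⟨le_of_lt hs0, le_of_lt hs1⟩, rfl⟩
    have hαpos : 0 < α := by
      by_contra hle
      push_neg at hle
      have hβ0 : (0:ℝ) < β := by linarith
      have hβne : β ≠ 0 := ne_of_gt hβ0
      have hbmem : b ∈ segment ℝ x a := by
        refine ⟨β⁻¹, -α * β⁻¹, by positivity,
          mul_nonneg (by linarith) (by positivity), by field_simp; linarith, ?_⟩
        rw [hxcombo]
        match_scalars <;> field_simp <;> ring
      refine hposb ?_
      have hxh : x ∈ convexHull ℝ ({a,c,d} : Set Pt) :=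
        segment_subset_convexHull (by simp) (by simp) hxseg
      have hah : a ∈ convexHull ℝ ({a,c,d} : Set Pt) := subset_convexHull ℝ _ (by simp)
      exact (convex_convexHull ℝ _).segment_subset hxh hah hbmem
    have hβpos : 0 < β := by
      by_contra hle
      push_neg at hle
      have hα0 : (0:ℝ) < α := by linarith
      have hαne : α ≠ 0 := ne_of_gt hα0
      have hamem : a ∈ segment ℝ x b := by
        refine ⟨α⁻¹, -β * α⁻¹, by positivity,
          mul_nonneg (by linarith) (by positivity), by field_simp; linarith, ?_⟩
        rw [hxcombo]
        match_scalars <;> field_simp <;> ring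
      refine hposa ?_
      have hxh : x ∈ convexHull ℝ ({b,c,d} : Set Pt) :=
        segment_subset_convexHull (by simp) (by simp) hxseg
      have hbh : b ∈ convexHull ℝ ({b,c,d} : Set Pt) := subset_convexHull ℝ _ (by simp)
      exact (convex_convexHull ℝ _).segment_subset hxh hbh hamem
    set y : Pt := AffineMap.lineMap x c (1/2 : ℝ) with hy
    have hy0 : B₁.coord 0 y = α / 2 := by
      rw [hy, coord_lineMap, ← hα, c1c, if_neg (by decide)]; ring
    have hy1 : B₁.coord 1 y = β / 2 := by
      rw [hy, coord_lineMap, ← hβ, c1c, if_neg (by decide)]; ring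
    have hy2 : B₁.coord 2 y = 1 / 2 := by
      rw [hy, coord_lineMap, hx2, c1c, if_pos rfl]; ring
    have hx30 : B₃.coord 0 x = 1 - s := by
      rw [hx, coord_lineMap, c3c, c3d, if_pos rfl, if_neg (by decide)]; ring
    have hx31 : B₃.coord 1 x = s := by
      rw [hx, coord_lineMap, c3c, c3d, if_neg (by decide), if_pos rfl]; ring
    have hx32 : B₃.coord 2 x = 0 := by
      rw [hx, coord_lineMap, c3c, c3d, if_neg (by decide), if_neg (by decide)]; ring
    have hy30 : B₃.coord 0 y = 1 - s / 2 := by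
      rw [hy, coord_lineMap, hx30, c3c, if_pos rfl]; ring
    have hy31 : B₃.coord 1 y = s / 2 := by
      rw [hy, coord_lineMap, hx31, c3c, if_neg (by decide)]; ring
    have hy32 : B₃.coord 2 y = 0 := by
      rw [hy, coord_lineMap, hx32, c3c, if_neg (by decide)]; ring
    obtain ⟨δ, hδ0, hδ1, hz0, hz1, hz2⟩ :=
      exists_delta (α/2) (β/2) (1/2) (B₁.coord 0 q - α/2) (B₁.coord 1 q - β/2)
        (B₁.coord 2 q - 1/2) (by positivity) (by positivity) (by norm_num)
    set z : Pt := AffineMap.lineMap y q δ with hz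
    have hzT1 : z ∈ interior (convexHull ℝ ({a,b,c} : Set Pt)) := by
      rw [interior_tri a b c hnc1, ← hB₁]
      simp only [Set.mem_setOf_eq]
      intro i
      fin_cases i
      · rw [show (⟨0, by norm_num⟩ : Fin 3) = (0 : Fin 3) from rfl, hz, coord_lineMap, hy0]
        exact hz0
      · rw [show (⟨1, by norm_num⟩ : Fin 3) = (1 : Fin 3) from rfl, hz, coord_lineMap, hy1]
        exact hz1
      · rw [show (⟨2, by norm_num⟩ : Fin 3) = (2 : Fin 3) from rfl, hz, coord_lineMap, hy2]
        exact hz2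
    have hzT3 : z ∈ interior (convexHull ℝ ({c,d,q} : Set Pt)) := by
      rw [interior_tri c d q hnc3, ← hB₃]
      simp only [Set.mem_setOf_eq]
      intro i
      fin_cases i
      · rw [show (⟨0, by norm_num⟩ : Fin 3) = (0 : Fin 3) from rfl, hz, coord_lineMap, hy30,
          c3q, if_neg (by decide)]
        nlinarith
      · rw [show (⟨1, by norm_num⟩ : Fin 3) = (1 : Fin 3) from rfl, hz, coord_lineMap, hy31,
          c3q, if_neg (by decide)]
        nlinarith
      · rw [show (⟨2, by norm_num⟩ : Fin 3) = (2 : Fin 3) from rfl, hz, coord_lineMap, hy32,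
          c3q, if_pos rfl]
        nlinarith
    exact absurd (hd13 ▸ Set.mem_inter hzT1 hzT3) (Set.notMem_empty z)
  · -- γ = 0 : a, b, d collinear, contradiction
    refine hnc2 ?_
    have hd' : d = (B₁.coord 0 d) • a + (B₁.coord 1 d) • b := by
      have := combo2 a b c hnc1 d (by rw [← hB₁, ← hγ, hγ0]); rwa [← hB₁] at this
    have hsum : B₁.coord 0 d + B₁.coord 1 d = 1 := by
      have := sum_coords B₁ d; rw [← hγ, hγ0] at this; linarith
    have key : ∀ u v : ℝ, u + v = 1 → d = u • a + v • b → d ∈ line[ℝ, a, b] := by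
      intro u v huv hd''
      have hEq : d = AffineMap.lineMap a b v := by
        rw [AffineMap.lineMap_apply_module, hd'']
        match_scalars <;> linarith
      rw [hEq]
      exact AffineMap.lineMap_mem_affineSpan_pair _ _ _
    have hdmem : d ∈ line[ℝ, a, b] := key _ _ hsum hd'
    have hcol := collinear_insert_of_mem_affineSpan_pair hdmem
    have hset : ({d, a, b} : Set Pt) = {a, b, d} := by
      ext w; simp; tauto
    rwa [hset] at hcol
  · -- γ > 0 : c, d strictly on the same side of line ab ; triangles abc, abd overlap
    set m : Pt := AffineMap.lineMap a b (1/2 : ℝ) with hm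
    set w : Pt := AffineMap.lineMap m d (1/3 : ℝ) with hw
    have hm20 : B₂.coord 0 m = 1/2 := by
      rw [hm, coord_lineMap, c2a, c2b, if_pos rfl, if_neg (by decide)]; ring
    have hm21 : B₂.coord 1 m = 1/2 := by
      rw [hm, coord_lineMap, c2a, c2b, if_neg (by decide), if_pos rfl]; ring
    have hm22 : B₂.coord 2 m = 0 := by
      rw [hm, coord_lineMap, c2a, c2b, if_neg (by decide), if_neg (by decide)]; ring
    have hw20 : B₂.coord 0 w = 1/3 := by
      rw [hw, coord_lineMap, hm20, c2d, if_neg (by decide)]; ring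
    have hw21 : B₂.coord 1 w = 1/3 := by
      rw [hw, coord_lineMap, hm21, c2d, if_neg (by decide)]; ring
    have hw22 : B₂.coord 2 w = 1/3 := by
      rw [hw, coord_lineMap, hm22, c2d, if_pos rfl]; ring
    have hwint : w ∈ interior (convexHull ℝ ({a,b,d} : Set Pt)) := by
      rw [interior_tri a b d hnc2, ← hB₂]
      simp only [Set.mem_setOf_eq]
      intro i
      fin_cases i
      · rw [show (⟨0, by norm_num⟩ : Fin 3) = (0 : Fin 3) from rfl, hw20]; norm_num
      · rw [show (⟨1, by norm_num⟩ : Fin 3) = (1 : Fin 3) from rfl, hw21]; norm_num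
      · rw [show (⟨2, by norm_num⟩ : Fin 3) = (2 : Fin 3) from rfl, hw22]; norm_num
    have hmmem : m ∈ convexHull ℝ ({a,b,d} : Set Pt) := by
      have hm' : m ∈ segment ℝ a b := by
        rw [segment_eq_image_lineMap]; exact ⟨1/2, by norm_num, rfl⟩
      exact segment_subset_convexHull (by simp) (by simp) hm'
    have hm10 : B₁.coord 0 m = 1/2 := by
      rw [hm, coord_lineMap, c1a, c1b, if_pos rfl, if_neg (by decide)]; ring
    have hm11 : B₁.coord 1 m = 1/2 := by
      rw [hm, coord_lineMap, c1a, c1b, if_neg (by decide), if_pos rfl]; ring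
    have hm12 : B₁.coord 2 m = 0 := by
      rw [hm, coord_lineMap, c1a, c1b, if_neg (by decide), if_neg (by decide)]; ring
    have hw12 : B₁.coord 2 w = γ / 3 := by
      rw [hw, coord_lineMap, hm12, ← hγ]; ring
    obtain ⟨δ, hδ0, hδ1, hz0, hz1, _⟩ :=
      exists_delta (1/2) (1/2) 1 (B₁.coord 0 w - 1/2) (B₁.coord 1 w - 1/2) 0
        (by norm_num) (by norm_num) (by norm_num)
    set z : Pt := AffineMap.lineMap m w δ with hz
    have hzT1 : z ∈ interior (convexHull ℝ ({a,b,c} : Set Pt)) := by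
      rw [interior_tri a b c hnc1, ← hB₁]
      simp only [Set.mem_setOf_eq]
      intro i
      fin_cases i
      · rw [show (⟨0, by norm_num⟩ : Fin 3) = (0 : Fin 3) from rfl, hz, coord_lineMap, hm10]
        exact hz0
      · rw [show (⟨1, by norm_num⟩ : Fin 3) = (1 : Fin 3) from rfl, hz, coord_lineMap, hm11]
        exact hz1
      · rw [show (⟨2, by norm_num⟩ : Fin 3) = (2 : Fin 3) from rfl, hz, coord_lineMap, hm12,
          hw12]
        nlinarith
    have hzT2 : z ∈ interior (convexHull ℝ ({a,b,d} : Set Pt)) := by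
      have hseg : z ∈ openSegment ℝ m w := by
        rw [openSegment_eq_image_lineMap]
        exact ⟨δ, ⟨hδ0, hδ1⟩, rfl⟩
      exact (convex_convexHull ℝ _).openSegment_self_interior_subset_interior hmmem hwint hseg
    exact absurd (hd12 ▸ Set.mem_inter hzT1 hzT2) (Set.notMem_empty z)

section Combinatorics

lemma flipStep_setup {P : Finset Pt} {𝒯 𝒯' : Triangulation P} {f : Flip}
    (h : FlipStep 𝒯 f 𝒯') :
    ∃ a b c d : Pt, a ≠ b ∧ c ≠ d ∧ c ≠ a ∧ c ≠ b ∧ d ≠ a ∧ d ≠ b ∧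
      f.old = {a, b} ∧ f.new = {c, d} ∧
      ({a,b,c} : Finset Pt) ∈ 𝒯.triangles ∧ ({a,b,d} : Finset Pt) ∈ 𝒯.triangles ∧
      (∀ p ∈ ({a,b,c,d} : Finset Pt),
        p ∉ convexHull ℝ ((({a,b,c,d} : Finset Pt).erase p : Finset Pt) : Set Pt)) ∧
      𝒯'.triangles = (𝒯.triangles \ {{a,b,c}, {a,b,d}}) ∪
        f.old.image (fun p => insert p f.new) := by
  classical
  obtain ⟨T₁, hT₁, T₂, hT₂, hne, hcard, hsub1, hsub2, huniq, hQ4, hconv, hnewdef, htris⟩ := h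
  obtain ⟨a, b, hab, holdeq⟩ := Finset.card_eq_two.1 hcard
  -- third vertex of T₁
  have hcard1 : T₁.card = 3 := 𝒯.card_eq T₁ hT₁
  have hcard2' : T₂.card = 3 := 𝒯.card_eq T₂ hT₂
  have hsd1 : (T₁ \ f.old).card = 1 := by
    rw [Finset.card_sdiff_of_subset hsub1, hcard1, hcard]
  have hsd2 : (T₂ \ f.old).card = 1 := by
    rw [Finset.card_sdiff_of_subset hsub2, hcard2', hcard]
  obtain ⟨c, hc⟩ := Finset.card_eq_one.1 hsd1
  obtain ⟨d, hd⟩ := Finset.card_eq_one.1 hsd2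
  have hcmem : c ∈ T₁ ∧ c ∉ f.old := by
    have : c ∈ T₁ \ f.old := by rw [hc]; exact Finset.mem_singleton_self c
    exact ⟨(Finset.mem_sdiff.1 this).1, (Finset.mem_sdiff.1 this).2⟩
  have hdmem : d ∈ T₂ ∧ d ∉ f.old := by
    have : d ∈ T₂ \ f.old := by rw [hd]; exact Finset.mem_singleton_self d
    exact ⟨(Finset.mem_sdiff.1 this).1, (Finset.mem_sdiff.1 this).2⟩
  have hT1eq : T₁ = {a, b, c} := by
    have h1 : T₁ = f.old ∪ (T₁ \ f.old) := (Finset.union_sdiff_of_subset hsub1).symm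
    rw [h1, hc, holdeq]
    ext x; simp; try tauto
  have hT2eq : T₂ = {a, b, d} := by
    have h1 : T₂ = f.old ∪ (T₂ \ f.old) := (Finset.union_sdiff_of_subset hsub2).symm
    rw [h1, hd, holdeq]
    ext x; simp; try tauto
  have hca : c ≠ a := fun hEq => hcmem.2 (by rw [holdeq, hEq]; simp)
  have hcb : c ≠ b := fun hEq => hcmem.2 (by rw [holdeq, hEq]; simp)
  have hda : d ≠ a := fun hEq => hdmem.2 (by rw [holdeq, hEq]; simp)
  have hdb : d ≠ b := fun hEq => hdmem.2 (by rw [holdeq, hEq]; simp)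
  have hcd : c ≠ d := by
    intro hEq
    apply hne
    rw [hT1eq, hT2eq, hEq]
  have hQeq : T₁ ∪ T₂ = {a, b, c, d} := by
    rw [hT1eq, hT2eq]; ext x; simp; try tauto
  have hneweq : f.new = {c, d} := by
    rw [hnewdef, hQeq, holdeq]
    ext x
    simp only [Finset.mem_sdiff, Finset.mem_insert, Finset.mem_singleton]
    constructor
    · rintro ⟨h1 | h1 | h1 | h1, h2⟩ <;> tauto
    · rintro (rfl | rfl)
      · refine ⟨by tauto, ?_⟩
        rintro (h' | h') <;> [exact hca h'; exact hcb h']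
      · refine ⟨by tauto, ?_⟩
        rintro (h' | h') <;> [exact hda h'; exact hdb h']
  refine ⟨a, b, c, d, hab, hcd, hca, hcb, hda, hdb, holdeq, hneweq, hT1eq ▸ hT₁, hT2eq ▸ hT₂,
    ?_, ?_⟩
  · rw [← hQeq]; exact hconv
  · rw [htris, hT1eq, hT2eq]

lemma flipStep_two_triangles {P : Finset Pt} {𝒯 𝒯' : Triangulation P} {f : Flip}
    (h : FlipStep 𝒯 f 𝒯') :
    ∃ T₁ ∈ 𝒯.triangles, ∃ T₂ ∈ 𝒯.triangles,
      f.old.card = 2 ∧ f.old ⊆ T₁ ∧ f.old ⊆ T₂ ∧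
      (∀ T ∈ 𝒯.triangles, f.old ⊆ T → T = T₁ ∨ T = T₂) := by
  obtain ⟨T₁, hT₁, T₂, hT₂, _, hcard, hsub1, hsub2, huniq, _⟩ := h
  exact ⟨T₁, hT₁, T₂, hT₂, hcard, hsub1, hsub2, huniq⟩

/-- The new edge of a flip is an edge of the resulting triangulation. -/
lemma flipStep_isEdge_new {P : Finset Pt} {𝒯 𝒯' : Triangulation P} {f : Flip}
    (h : FlipStep 𝒯 f 𝒯') : 𝒯'.IsEdge f.new := by
  classical
  obtain ⟨a, b, c, d, hab, hcd, hca, hcb, hda, hdb, holdeq, hneweq, hT₁, hT₂, hconv, htris⟩ :=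
    flipStep_setup h
  refine ⟨by rw [hneweq]; rw [Finset.card_insert_of_notMem (by simp [hcd])]; simp, ?_⟩
  refine ⟨insert a f.new, ?_, Finset.subset_insert _ _⟩
  rw [htris]
  apply Finset.mem_union_right
  exact Finset.mem_image_of_mem _ (by rw [holdeq]; simp)

/-- Edges other than the flipped edge persist through a flip. -/
lemma flipStep_isEdge_of_ne {P : Finset Pt} {𝒯 𝒯' : Triangulation P} {f : Flip} {e : Edge}
    (h : FlipStep 𝒯 f 𝒯') (he : 𝒯.IsEdge e) (hne : e ≠ f.old) : 𝒯'.IsEdge e := by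
  classical
  obtain ⟨a, b, c, d, hab, hcd, hca, hcb, hda, hdb, holdeq, hneweq, hT₁, hT₂, hconv, htris⟩ :=
    flipStep_setup h
  obtain ⟨hcard, T, hT, hsub⟩ := he
  have holdcard : f.old.card = 2 := by rw [holdeq]; simp [hab]
  -- helper : a side of one of the two flipped triangles, other than the old edge, survives
  have key : ∀ x : Pt, x ∈ f.new → e ⊆ insert x f.old → 𝒯'.IsEdge e := by
    intro x hxnew hsubx
    have hxe : x ∈ e := by
      by_contra hxe
      have hsub' : e ⊆ f.old := by
        intro z hz
        rcases Finset.mem_insert.1 (hsubx hz) with rfl | hz'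
        · exact absurd hz hxe
        · exact hz'
      exact hne (Finset.eq_of_subset_of_card_le hsub' (by omega))
    have herase : (e.erase x).card = 1 := by
      rw [Finset.card_erase_of_mem hxe, hcard]
    obtain ⟨w, hw⟩ := Finset.card_eq_one.1 herase
    have hwe : w ∈ e := by
      have : w ∈ e.erase x := by rw [hw]; exact Finset.mem_singleton_self w
      exact Finset.mem_of_mem_erase this
    have hwx : w ≠ x := by
      have : w ∈ e.erase x := by rw [hw]; exact Finset.mem_singleton_self w
      exact Finset.ne_of_mem_erase this
    have hwold : w ∈ f.old := by
      rcases Finset.mem_insert.1 (hsubx hwe) with h' | h'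
      · exact absurd h' hwx
      · exact h'
    have heeq : e = insert x {w} := by
      rw [← hw, Finset.insert_erase hxe]
    refine ⟨hcard, insert w f.new, ?_, ?_⟩
    · rw [htris]
      exact Finset.mem_union_right _ (Finset.mem_image_of_mem _ hwold)
    · rw [heeq]
      intro z hz
      rcases Finset.mem_insert.1 hz with rfl | hz'
      · exact Finset.mem_insert_of_mem hxnew
      · rw [Finset.mem_singleton.1 hz']
        exact Finset.mem_insert_self _ _
  by_cases hT1 : T = {a, b, c}
  · refine key c (by rw [hneweq]; simp) ?_
    have : insert c f.old = ({a, b, c} : Finset Pt) := by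
      rw [holdeq]; ext z; simp; try tauto
    rw [this, ← hT1]; exact hsub
  · by_cases hT2 : T = {a, b, d}
    · refine key d (by rw [hneweq]; simp) ?_
      have : insert d f.old = ({a, b, d} : Finset Pt) := by
        rw [holdeq]; ext z; simp; try tauto
      rw [this, ← hT2]; exact hsub
    · refine ⟨hcard, T, ?_, hsub⟩
      rw [htris]
      apply Finset.mem_union_left
      rw [Finset.mem_sdiff]
      exact ⟨hT, by simp [hT1, hT2]⟩

/-- Flipping cannot create an edge that is already present : the new edge crosses the old one. -/
lemma flipStep_not_isEdge_new {P : Finset Pt} {𝒯 𝒯' : Triangulation P} {f : Flip}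
    (h : FlipStep 𝒯 f 𝒯') : ¬ 𝒯.IsEdge f.new := by
  classical
  rintro ⟨hcard, T₃, hT₃, hsub⟩
  obtain ⟨a, b, c, d, hab, hcd, hca, hcb, hda, hdb, holdeq, hneweq, hT₁, hT₂, hconv, htris⟩ :=
    flipStep_setup h
  -- third vertex q of T₃
  have hcard3 : T₃.card = 3 := 𝒯.card_eq T₃ hT₃
  have hsd : (T₃ \ f.new).card = 1 := by
    rw [Finset.card_sdiff_of_subset hsub, hcard3, hcard]
  obtain ⟨q, hq⟩ := Finset.card_eq_one.1 hsd
  have hqmem : q ∈ T₃ ∧ q ∉ f.new := by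
    have : q ∈ T₃ \ f.new := by rw [hq]; exact Finset.mem_singleton_self q
    exact ⟨(Finset.mem_sdiff.1 this).1, (Finset.mem_sdiff.1 this).2⟩
  have hT3eq : T₃ = {c, d, q} := by
    have h1 : T₃ = f.new ∪ (T₃ \ f.new) := (Finset.union_sdiff_of_subset hsub).symm
    rw [h1, hq, hneweq]
    ext x; simp; try tauto
  -- coercions to sets
  have coe1 : (({a,b,c} : Finset Pt) : Set Pt) = ({a,b,c} : Set Pt) := by simp
  have coe2 : (({a,b,d} : Finset Pt) : Set Pt) = ({a,b,d} : Set Pt) := by simp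
  have coe3 : (({c,d,q} : Finset Pt) : Set Pt) = ({c,d,q} : Set Pt) := by simp
  -- T₃ is distinct from the two flipped triangles
  have hT3ne1 : T₃ ≠ ({a,b,c} : Finset Pt) := by
    intro hEq
    have : d ∈ ({a,b,c} : Finset Pt) := by
      rw [← hEq]; exact hsub (by rw [hneweq]; simp)
    simp only [Finset.mem_insert, Finset.mem_singleton] at this
    rcases this with h' | h' | h' <;> [exact hda h'; exact hdb h'; exact hcd h'.symm]
  have hT3ne2 : T₃ ≠ ({a,b,d} : Finset Pt) := by
    intro hEq
    have : c ∈ ({a,b,d} : Finset Pt) := by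
      rw [← hEq]; exact hsub (by rw [hneweq]; simp)
    simp only [Finset.mem_insert, Finset.mem_singleton] at this
    rcases this with h' | h' | h' <;> [exact hca h'; exact hcb h'; exact hcd h']
  -- non collinearity
  have hnc1 : ¬ Collinear ℝ ({a,b,c} : Set Pt) := by
    have := 𝒯.not_collinear _ hT₁; rwa [coe1] at this
  have hnc2 : ¬ Collinear ℝ ({a,b,d} : Set Pt) := by
    have := 𝒯.not_collinear _ hT₂; rwa [coe2] at this
  have hnc3 : ¬ Collinear ℝ ({c,d,q} : Set Pt) := by
    have := 𝒯.not_collinear _ hT₃; rwa [hT3eq, coe3] at this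
  -- convex position
  have hposa : a ∉ convexHull ℝ ({b,c,d} : Set Pt) := by
    have h1 := hconv a (by simp)
    have h2 : (({a,b,c,d} : Finset Pt).erase a : Set Pt) = ({b,c,d} : Set Pt) := by
      have : ({a,b,c,d} : Finset Pt).erase a = ({b,c,d} : Finset Pt) := by
        ext x
        simp only [Finset.mem_erase, Finset.mem_insert, Finset.mem_singleton]
        constructor
        · rintro ⟨h3, rfl | h4 | h4 | h4⟩
          · exact absurd rfl h3
          · tauto
          · tauto
          · tauto
        · rintro (rfl | rfl | rfl)
          · exact ⟨hab.symm, by tauto⟩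
          · exact ⟨hca, by tauto⟩
          · exact ⟨hda, by tauto⟩
      rw [this]; simp
    rwa [h2] at h1
  have hposb : b ∉ convexHull ℝ ({a,c,d} : Set Pt) := by
    have h1 := hconv b (by simp)
    have h2 : (({a,b,c,d} : Finset Pt).erase b : Set Pt) = ({a,c,d} : Set Pt) := by
      have : ({a,b,c,d} : Finset Pt).erase b = ({a,c,d} : Finset Pt) := by
        ext x
        simp only [Finset.mem_erase, Finset.mem_insert, Finset.mem_singleton]
        constructor
        · rintro ⟨h3, h4 | rfl | h4 | h4⟩
          · tauto
          · exact absurd rfl h3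
          · tauto
          · tauto
        · rintro (rfl | rfl | rfl)
          · exact ⟨hab, by tauto⟩
          · exact ⟨hcb, by tauto⟩
          · exact ⟨hdb, by tauto⟩
      rw [this]; simp
    rwa [h2] at h1
  -- disjoint interiors
  have hd12 : interior (convexHull ℝ ({a,b,c} : Set Pt)) ∩
      interior (convexHull ℝ ({a,b,d} : Set Pt)) = ∅ := by
    have := 𝒯.interiors_disjoint _ hT₁ _ hT₂ (by
      intro hEq
      have : d ∈ ({a,b,c} : Finset Pt) := by rw [hEq]; simp
      simp only [Finset.mem_insert, Finset.mem_singleton] at this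
      rcases this with h' | h' | h' <;> [exact hda h'; exact hdb h'; exact hcd h'.symm])
    rwa [coe1, coe2] at this
  have hd13 : interior (convexHull ℝ ({a,b,c} : Set Pt)) ∩
      interior (convexHull ℝ ({c,d,q} : Set Pt)) = ∅ := by
    have := 𝒯.interiors_disjoint _ hT₁ _ hT₃ (fun hEq => hT3ne1 hEq.symm)
    rwa [coe1, hT3eq, coe3] at this
  exact geom_core hposa hposb hnc1 hnc2 hnc3 hd12 hd13

/-- The new edge of flip `i` persists as long as no later flip removes it. -/
lemma persists {P : Finset Pt} {r : ℕ} (S : FlipSeq P r) (i : Fin r) (n : ℕ)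
    (h1 : (i : ℕ) + 1 ≤ n) :
    ∀ (hn : n < r + 1),
      (∀ p : Fin r, (i : ℕ) < (p : ℕ) → (p : ℕ) < n → (S.flips p).old ≠ (S.flips i).new) →
      (S.tri ⟨n, hn⟩).IsEdge (S.flips i).new := by
  induction n, h1 using Nat.le_induction with
  | base =>
    intro hn _
    exact flipStep_isEdge_new (S.step i)
  | succ n hn' ih =>
    intro hn hp
    have hnr : n < r := by omega
    have hprev := ih (by omega) (fun p hp1 hp2 => hp p hp1 (by omega))
    exact flipStep_isEdge_of_ne (S.step ⟨n, hnr⟩) hprev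
      (hp ⟨n, hnr⟩ hn' (Nat.lt_succ_self n)).symm

/-- The indegree bound. -/
lemma indegree_le {P : Finset Pt} {r : ℕ} (S : FlipSeq P r) (j : Fin r) :
    {i : Fin r | S.Arc i j}.ncard ≤ 5 := by
  classical
  obtain ⟨T₁, hT₁, T₂, hT₂, hcard, hsub1, hsub2, huniq⟩ := flipStep_two_triangles (S.step j)
  set U : Finset Edge := T₁.powersetCard 2 ∪ T₂.powersetCard 2 with hU
  have hUcard : U.card ≤ 5 := by
    have h1 : (T₁.powersetCard 2).card = 3 := by
      rw [Finset.card_powersetCard, (S.tri j.castSucc).card_eq T₁ hT₁]; rfl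
    have h2 : (T₂.powersetCard 2).card = 3 := by
      rw [Finset.card_powersetCard, (S.tri j.castSucc).card_eq T₂ hT₂]; rfl
    have h3 : (S.flips j).old ∈ T₁.powersetCard 2 ∩ T₂.powersetCard 2 :=
      Finset.mem_inter.2 ⟨Finset.mem_powersetCard.2 ⟨hsub1, hcard⟩,
        Finset.mem_powersetCard.2 ⟨hsub2, hcard⟩⟩
    have h4 := Finset.card_union_add_card_inter (T₁.powersetCard 2) (T₂.powersetCard 2)
    have h5 : 1 ≤ (T₁.powersetCard 2 ∩ T₂.powersetCard 2).card :=
      Finset.card_pos.2 ⟨_, h3⟩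
    rw [hU]
    omega
  have hmap : ∀ i : Fin r, S.Arc i j → (S.flips i).new ∈ U := by
    intro i hi
    obtain ⟨hij, hshare, _⟩ := hi
    rcases hshare with heq | ⟨hne', hc1, hc2, T, hT, hsubn, hsubo⟩
    · rw [heq]
      exact Finset.mem_union_left _ (Finset.mem_powersetCard.2 ⟨hsub1, hcard⟩)
    · rcases huniq T hT hsubo with rfl | rfl
      · exact Finset.mem_union_left _ (Finset.mem_powersetCard.2 ⟨hsubn, hc1⟩)
      · exact Finset.mem_union_right _ (Finset.mem_powersetCard.2 ⟨hsubn, hc1⟩)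
  have key : ∀ u v : Fin r, S.Arc u j → S.Arc v j → u < v →
      (S.flips u).new = (S.flips v).new → False := by
    intro u v hu hv huv heqn
    obtain ⟨hvj, _, _⟩ := hv
    obtain ⟨huj, _, hcond⟩ := hu
    have hpers : (S.tri v.castSucc).IsEdge (S.flips u).new := by
      refine persists S u (v : ℕ) (by exact Fin.lt_def.1 huv) (by omega) ?_
      intro p hp1 hp2
      exact hcond p (Fin.lt_def.2 hp1) (lt_trans (Fin.lt_def.2 hp2) hvj)
    rw [heqn] at hpers
    exact flipStep_not_isEdge_new (S.step v) hpers
  have hinj : Set.InjOn (fun i => (S.flips i).new) {i : Fin r | S.Arc i j} := by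
    intro u hu v hv heq
    by_contra hne'
    rcases lt_or_gt_of_ne hne' with hlt | hgt
    · exact key u v hu hv hlt heq
    · exact key v u hv hu hgt heq.symm
  calc {i : Fin r | S.Arc i j}.ncard
      = ((fun i => (S.flips i).new) '' {i : Fin r | S.Arc i j}).ncard :=
        (Set.ncard_image_of_injOn hinj).symm
    _ ≤ (↑U : Set Edge).ncard := by
        refine Set.ncard_le_ncard ?_ U.finite_toSet
        rintro e ⟨i, hi, rfl⟩
        exact hmap i hi
    _ = U.card := Set.ncard_coe_finset U
    _ ≤ 5 := hUcard

end Combinatorics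

/-- Let `T₀` be a triangulation of a finite point set `P` in the
plane and `F = ⟨f₁,…,f_r⟩` a valid sequence of flips with respect to `T₀`. Then every
node of `D_F` has indegree at most `5`, and consequently the number of arcs of `D_F` is
at most `5` times the number `r` of nodes of `D_F`. -/
theorem statement10 {P : Finset Pt} {r : ℕ} (S : FlipSeq P r) :
    (∀ j : Fin r, {i : Fin r | S.Arc i j}.ncard ≤ 5) ∧
    {p : Fin r × Fin r | S.Arc p.1 p.2}.ncard ≤ 5 * r := by
  classical
  refine ⟨fun j => indegree_le S j, ?_⟩
  set A : Set (Fin r × Fin r) := {p : Fin r × Fin r | S.Arc p.1 p.2} with hA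
  have hfin : A.Finite := Set.toFinite _
  have hfinj : ∀ j : Fin r, ({i : Fin r | S.Arc i j}).Finite := fun j => Set.toFinite _
  set g : Fin r → Finset (Fin r × Fin r) :=
    fun j => ((hfinj j).toFinset).image (fun i => (i, j)) with hg
  have hsub : hfin.toFinset ⊆ Finset.univ.biUnion g := by
    intro p hp
    have hp' : S.Arc p.1 p.2 := (Set.Finite.mem_toFinset hfin).1 hp
    refine Finset.mem_biUnion.2 ⟨p.2, Finset.mem_univ _, Finset.mem_image.2 ⟨p.1, ?_, ?_⟩⟩
    · exact (Set.Finite.mem_toFinset _).2 hp'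
    · rfl
  calc A.ncard = hfin.toFinset.card := Set.ncard_eq_toFinset_card _ hfin
    _ ≤ (Finset.univ.biUnion g).card := Finset.card_le_card hsub
    _ ≤ ∑ j : Fin r, (g j).card := Finset.card_biUnion_le
    _ ≤ ∑ _j : Fin r, 5 := by
        refine Finset.sum_le_sum fun j _ => ?_
        calc (g j).card ≤ ((hfinj j).toFinset).card := Finset.card_image_le
          _ = {i : Fin r | S.Arc i j}.ncard := (Set.ncard_eq_toFinset_card _ _).symm
          _ ≤ 5 := indegree_le S j
    _ = 5 * r := by simp [Finset.sum_const, Finset.card_univ, mul_comm]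
end
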